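/- arXiv:1709.05174 — 5 statements merged into one kernel-verified Lean document; each statement's English description precedes it below -/
import Mathlib

section
/- For any two pmfs p and q on a finite set S with total variation distance ‖p−q‖_TV < 1, the Chernoff information satisfies C(p‖q) ≤ −log(1 − ‖p−q‖_TV). -/
/-- A probability mass function on a finite set `S`. -/
def IsPMF {S : Type*} [Fintype S] (p : S → ℝ) : Prop :=
  (∀ s, 0 ≤ p s) ∧ ∑ s, p s = 1

/-- Total variation distance between two pmfs. -/
noncomputable def tvDist {S : Type*} [Fintype S] (p q : S → ℝ) : ℝ :=
  (1 / 2) * ∑ s, |p s - q s|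

/-- Chernoff information between two pmfs, with real-power conventions
`0 ^ t = 0` for `t ≠ 0` and `0 ^ 0 = 1` (these are the `Real.rpow` conventions). -/
noncomputable def chernoffInfo {S : Type*} [Fintype S] (p q : S → ℝ) : ℝ :=
  -Real.log (sInf { v : ℝ | ∃ α ∈ Set.Icc (0 : ℝ) 1, v = ∑ s, p s ^ α * q s ^ (1 - α) })

lemma min_le_rpow_mul {a b α : ℝ} (ha : 0 ≤ a) (hb : 0 ≤ b) (h0 : 0 ≤ α) (h1 : α ≤ 1) :
    min a b ≤ a ^ α * b ^ (1 - α) := by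
  rcases eq_or_lt_of_le ha with ha' | ha'
  · rw [← ha', min_eq_left hb]
    positivity
  rcases eq_or_lt_of_le hb with hb' | hb'
  · rw [min_eq_right (by rw [← hb']; exact ha)]
    rw [← hb']
    positivity
  set m := min a b with hm
  have hm0 : 0 < m := lt_min ha' hb'
  calc m = m ^ α * m ^ (1 - α) := by
        rw [← Real.rpow_add hm0]; simp
    _ ≤ a ^ α * b ^ (1 - α) := by
        apply mul_le_mul
        · exact Real.rpow_le_rpow hm0.le (min_le_left a b) h0
        · exact Real.rpow_le_rpow hm0.le (min_le_right a b) (by linarith)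
        · positivity
        · positivity

/-- `C(p‖q) ≤ -log(1 - ‖p - q‖_TV)` whenever `‖p - q‖_TV < 1`. -/
theorem chernoff_le_neg_log_one_sub_tv {S : Type*} [Fintype S] (p q : S → ℝ)
    (hp : IsPMF p) (hq : IsPMF q) (h : tvDist p q < 1) :
    chernoffInfo p q ≤ -Real.log (1 - tvDist p q) := by
  have hmin : ∑ s, min (p s) (q s) = 1 - tvDist p q := by
    have : ∀ s, |p s - q s| = p s + q s - 2 * min (p s) (q s) := by
      intro s
      rcases le_total (p s) (q s) with hle | hle
      · rw [min_eq_left hle, abs_of_nonpos (by linarith)]; ring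
      · rw [min_eq_right hle, abs_of_nonneg (by linarith)]; ring
    unfold tvDist
    rw [Finset.sum_congr rfl (fun s _ => this s), Finset.sum_sub_distrib,
      Finset.sum_add_distrib, hp.2, hq.2, ← Finset.mul_sum]
    ring
  have hpos : 0 < 1 - tvDist p q := by linarith
  unfold chernoffInfo
  rw [neg_le_neg_iff]
  apply Real.log_le_log hpos
  apply le_csInf
  · exact ⟨∑ s, p s ^ (0:ℝ) * q s ^ (1 - (0:ℝ)), 0, ⟨le_refl 0, zero_le_one⟩, rfl⟩
  · rintro v ⟨α, ⟨h0, h1⟩, rfl⟩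
    rw [← hmin]
    exact Finset.sum_le_sum fun s _ => min_le_rpow_mul (hp.1 s) (hq.1 s) h0 h1
end

section
/- Let p be a pmf on X×Y (X, Y finite) whose marginals are strictly positive: Σ_y p(x,y) > 0 for every x and Σ_x p(x,y) > 0 for every y. Then ε₁(p) = max{ min_{(x,y)∈X×Y} δ(x,y) : δ : X×Y → [0,1] such that the |X|×|Y| matrix with entries p(x,y)·δ(x,y) has rank at most one }. -/
/-- The value assigned to a path `(x₁,y₁,…,x_k,y_k)` (indexed here by `Fin (m+1)`,
so `k = m+1 ≥ 1`).  Subtraction in `Fin (m+1)` is cyclic, so the denominator is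
`p(x₁,y_k) · ∏_{i=2}^k p(x_i,y_{i-1})`. -/
noncomputable def pathValue {X Y : Type*} [Fintype X] [Fintype Y] (p : X × Y → ℝ)
    {m : ℕ} (x : Fin (m + 1) → X) (y : Fin (m + 1) → Y) : ℝ :=
  ((∏ i, p (x i, y i)) / ∏ i, p (x i, y (i - 1))) ^ (1 / (m + 1 : ℝ))

/-- A path is admissible if the `x_i` are pairwise distinct, the `y_i` are pairwise
distinct, `p(x₁,y_k) > 0`, and `p(x_i,y_{i-1}) > 0` for `2 ≤ i ≤ k`. -/
def IsAdmissiblePath {X Y : Type*} [Fintype X] [Fintype Y] (p : X × Y → ℝ)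
    {m : ℕ} (x : Fin (m + 1) → X) (y : Fin (m + 1) → Y) : Prop :=
  Function.Injective x ∧ Function.Injective y ∧ ∀ i, 0 < p (x i, y (i - 1))

/-- `ε₁(p)`: the minimum value over all admissible paths. -/
noncomputable def eps1 {X Y : Type*} [Fintype X] [Fintype Y] (p : X × Y → ℝ) : ℝ :=
  sInf { v : ℝ | ∃ (m : ℕ) (x : Fin (m + 1) → X) (y : Fin (m + 1) → Y),
    IsAdmissiblePath p x y ∧ v = pathValue p x y }

namespace Eps1Aux


variable {X Y : Type*}

/-- weight of one step of a cyclic chain: from diagonal pair `a` to diagonal pair `b`,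
the off-diagonal entry used is `(b.1, a.2)`. -/
def cost (w : X → Y → ℝ) (L : ℝ) (a b : X × Y) : ℝ := w b.1 a.2 - w a.1 a.2 - L

/-- weight of an open chain starting at `a` through the list `l`. -/
def chainW (w : X → Y → ℝ) (L : ℝ) : X × Y → List (X × Y) → ℝ
  | _, [] => 0
  | a, b :: t => cost w L a b + chainW w L b t

/-- weight of the cycle given by a list (closing back to the head). -/
def cycL (w : X → Y → ℝ) (L : ℝ) : List (X × Y) → ℝ
  | [] => 0
  | a :: l => chainW w L a (l ++ [a])

variable (w : X → Y → ℝ) (L : ℝ)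

lemma chainW_append (a b : X × Y) (s t : List (X × Y)) :
    chainW w L a (s ++ b :: t) = chainW w L a (s ++ [b]) + chainW w L b t := by
  induction s generalizing a with
  | nil => simp [chainW]
  | cons c s ih => simp [chainW, ih c, add_assoc]

lemma chainW_last_fst (a : X × Y) (m : List (X × Y)) (b b' : X × Y) (h : b.1 = b'.1) :
    chainW w L a (m ++ [b]) = chainW w L a (m ++ [b']) := by
  induction m generalizing a with
  | nil => simp [chainW, cost, h]
  | cons c s ih => simp [chainW, ih c]

lemma chainW_head_snd (a b c : X × Y) (t : List (X × Y)) (h : a.2 = b.2) :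
    chainW w L a (c :: t) = chainW w L b (c :: t) + w b.1 b.2 - w a.1 a.2 := by
  simp only [chainW, cost, h]
  ring

lemma cycL_rotate (a : X × Y) (l : List (X × Y)) :
    cycL w L (a :: l) = cycL w L (l ++ [a]) := by
  cases l with
  | nil => simp [cycL]
  | cons b t =>
      show chainW w L a (b :: (t ++ [a])) = chainW w L b ((t ++ [a]) ++ [b])
      rw [show (t ++ [a]) ++ [b] = t ++ a :: [b] by simp]
      rw [chainW_append w L b a t [b]]
      simp [chainW, cost]
      ring

lemma cycL_rotate' (s t : List (X × Y)) : cycL w L (s ++ t) = cycL w L (t ++ s) := by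
  induction s generalizing t with
  | nil => simp
  | cons a s ih =>
      calc cycL w L ((a :: s) ++ t) = cycL w L (a :: (s ++ t)) := by simp
        _ = cycL w L ((s ++ t) ++ [a]) := cycL_rotate w L a (s ++ t)
        _ = cycL w L (s ++ (t ++ [a])) := by simp
        _ = cycL w L ((t ++ [a]) ++ s) := ih (t ++ [a])
        _ = cycL w L (t ++ (a :: s)) := by simp

lemma cycL_split_fst (a b : X × Y) (m₁ m₂ : List (X × Y)) (h : a.1 = b.1) :
    cycL w L (a :: (m₁ ++ b :: m₂)) = cycL w L (a :: m₁) + cycL w L (b :: m₂) := by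
  show chainW w L a ((m₁ ++ b :: m₂) ++ [a]) = _
  rw [show (m₁ ++ b :: m₂) ++ [a] = m₁ ++ b :: (m₂ ++ [a]) by simp]
  rw [chainW_append w L a b m₁ (m₂ ++ [a])]
  rw [chainW_last_fst w L a m₁ b a h.symm, chainW_last_fst w L b m₂ a b h]
  rfl

lemma cycL_split_snd (a b : X × Y) (m₁ m₂ : List (X × Y)) (h : a.2 = b.2) :
    cycL w L (a :: (m₁ ++ b :: m₂)) = cycL w L (b :: m₁) + cycL w L (a :: m₂) := by
  show chainW w L a ((m₁ ++ b :: m₂) ++ [a]) = chainW w L b (m₁ ++ [b]) + chainW w L a (m₂ ++ [a])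
  rw [show (m₁ ++ b :: m₂) ++ [a] = m₁ ++ b :: (m₂ ++ [a]) by simp]
  rw [chainW_append w L a b m₁ (m₂ ++ [a])]
  rcases m₁ with _ | ⟨c, s⟩
  · rcases m₂ with _ | ⟨d, r⟩
    · simp [chainW, cost, h]; ring
    · simp only [List.cons_append]

      rw [chainW_head_snd w L b a d (r ++ [a]) h.symm]
      simp [chainW, cost, h]; ring
  · simp only [List.cons_append]
    rw [chainW_head_snd w L a b c (s ++ [b]) h]
    rcases m₂ with _ | ⟨d, r⟩
    · simp [chainW, cost, h]; ring
    · simp only [List.cons_append]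

      rw [chainW_head_snd w L b a d (r ++ [a]) h.symm]
      simp [chainW, cost, h]; ring

lemma chainW_ofFn : ∀ (n : ℕ) (h : Fin (n + 1) → X × Y),
    chainW w L (h 0) (List.ofFn fun i => h i.succ) =
      ∑ i : Fin n, cost w L (h i.castSucc) (h i.succ) := by
  intro n
  induction n with
  | zero => intro h; simp [chainW, List.ofFn_zero]
  | succ n ih =>
      intro h
      have e1 : (List.ofFn fun i : Fin (n + 1) => h i.succ)
          = h 1 :: List.ofFn (fun i : Fin n => h i.succ.succ) := by
        rw [List.ofFn_succ]
        congr 1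
      rw [e1]
      show cost w L (h 0) (h 1) + chainW w L (h 1) (List.ofFn fun i => h i.succ.succ) = _
      rw [Fin.sum_univ_succ]
      have e2 := ih (fun i => h i.succ)
      simp only [Fin.succ_zero_eq_one] at e2
      rw [e2]
      simp only [Fin.castSucc_zero, Fin.succ_zero_eq_one, Fin.succ_castSucc]

lemma cycL_ofFn (n : ℕ) (g : Fin (n + 1) → X × Y) :
    cycL w L (List.ofFn g) = ∑ i : Fin (n + 1), cost w L (g i) (g (i + 1)) := by
  rw [List.ofFn_succ]
  show chainW w L (g 0) ((List.ofFn fun i => g i.succ) ++ [g 0]) = _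
  have hsz : ∀ i : Fin (n + 1), (Fin.snoc g (g 0) : Fin (n + 2) → X × Y) i.castSucc = g i :=
    fun i => Fin.snoc_castSucc ..
  have hofn : (List.ofFn fun i : Fin n => g i.succ) ++ [g 0]
      = List.ofFn (fun i : Fin (n + 1) => (Fin.snoc g (g 0) : Fin (n + 2) → X × Y) i.succ) := by
    rw [List.ofFn_succ' (f := fun i : Fin (n + 1) =>
      (Fin.snoc g (g 0) : Fin (n + 2) → X × Y) i.succ)]
    simp only [List.concat_eq_append]
    congr 1
    · congr 1
      funext i
      rw [Fin.succ_castSucc, Fin.snoc_castSucc]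
    · rw [show (Fin.last n).succ = Fin.last (n+1) by rfl, Fin.snoc_last]
  rw [hofn]
  have key := chainW_ofFn w L (n + 1) (Fin.snoc g (g 0))
  rw [show (Fin.snoc g (g 0) : Fin (n + 2) → X × Y) 0 = g 0 by
    rw [show (0 : Fin (n+2)) = (0 : Fin (n+1)).castSucc by rfl, Fin.snoc_castSucc]] at key
  rw [key]
  apply Finset.sum_congr rfl
  intro i _
  congr 1
  · exact hsz i
  · by_cases hi : i = Fin.last n
    · subst hi
      rw [Fin.succ_last, Fin.snoc_last]
      congr 1
      ext
      simp [Fin.add_def]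
    · have hlt : (i : ℕ) + 1 < n + 1 := by
        have := Fin.val_lt_last hi
        omega
      have hh : i.succ = (i + 1 : Fin (n+1)).castSucc := by
        ext
        simp [Fin.add_def, Nat.mod_eq_of_lt hlt]
      rw [hh, Fin.snoc_castSucc]


lemma exists_dup_split {α β : Type*} (f : α → β) :
    ∀ l : List α, ¬ (l.map f).Nodup →
      ∃ s c t c' r, l = s ++ c :: (t ++ c' :: r) ∧ f c = f c' := by
  intro l
  induction l with
  | nil => simp
  | cons a l ih =>
      intro hnd
      rw [List.map_cons, List.nodup_cons] at hnd
      by_cases hmem : f a ∈ l.map f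
      · obtain ⟨c', hc'l, hc'⟩ := List.mem_map.mp hmem
        obtain ⟨t, r, rfl⟩ := List.append_of_mem hc'l
        exact ⟨[], a, t, c', r, by simp, hc'.symm⟩
      · have hnd' : ¬ (l.map f).Nodup := fun h => hnd ⟨hmem, h⟩
        obtain ⟨s, c, t, c', r, rfl, hfc⟩ := ih hnd'
        exact ⟨a :: s, c, t, c', r, by simp, hfc⟩

section CycleNonneg

variable (H : ∀ l : List (X × Y), l ≠ [] →
    (l.map Prod.fst).Nodup → (l.map Prod.snd).Nodup → 0 ≤ cycL w L l)

include H

lemma cycL_nonneg : ∀ l : List (X × Y), 0 ≤ cycL w L l := by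
  suffices hs : ∀ (n : ℕ) (l : List (X × Y)), l.length ≤ n → 0 ≤ cycL w L l by
    intro l; exact hs l.length l le_rfl
  intro n
  induction n with
  | zero =>
      intro l hl
      rw [Nat.le_zero, List.length_eq_zero_iff] at hl
      subst hl
      exact le_of_eq rfl
  | succ n ih =>
      intro l hl
      rcases eq_or_ne l [] with rfl | hne
      · exact le_of_eq rfl
      by_cases hx : (l.map Prod.fst).Nodup
      · by_cases hy : (l.map Prod.snd).Nodup
        · exact H l hne hx hy
        · obtain ⟨s, c, t, c', r, rfl, hfc⟩ := exists_dup_split Prod.snd l hy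
          have hlen : s.length + (t.length + (r.length + 2)) ≤ n + 1 := by
            have h := hl; simp [List.length_append] at h; omega
          rw [cycL_rotate' w L s (c :: (t ++ c' :: r))]
          rw [show (c :: (t ++ c' :: r)) ++ s = c :: (t ++ c' :: (r ++ s)) by simp]
          rw [cycL_split_snd w L c c' t (r ++ s) hfc]
          have h1 : 0 ≤ cycL w L (c' :: t) := ih _ (by simp; omega)
          have h2 : 0 ≤ cycL w L (c :: (r ++ s)) := ih _ (by simp; omega)
          linarith
      · obtain ⟨s, c, t, c', r, rfl, hfc⟩ := exists_dup_split Prod.fst l hx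
        have hlen : s.length + (t.length + (r.length + 2)) ≤ n + 1 := by
          have h := hl; simp [List.length_append] at h; omega
        rw [cycL_rotate' w L s (c :: (t ++ c' :: r))]
        rw [show (c :: (t ++ c' :: r)) ++ s = c :: (t ++ c' :: (r ++ s)) by simp]
        rw [cycL_split_fst w L c c' t (r ++ s) hfc]
        have h1 : 0 ≤ cycL w L (c :: t) := ih _ (by simp; omega)
        have h2 : 0 ≤ cycL w L (c' :: (r ++ s)) := ih _ (by simp; omega)
        linarith

end CycleNonneg

/-! ### Walks in the bipartite constraint graph -/

def wEnd : X → List (Y × X) → X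
  | x, [] => x
  | _, (_, x') :: t => wEnd x' t

def wW (w : X → Y → ℝ) (L : ℝ) : X → List (Y × X) → ℝ
  | _, [] => 0
  | x, (y, x') :: t => (w x' y - w x y - L) + wW w L x' t

lemma wEnd_append (x : X) (u v : List (Y × X)) :
    wEnd x (u ++ v) = wEnd (wEnd x u) v := by
  induction u generalizing x with
  | nil => rfl
  | cons q t ih => exact ih q.2

lemma wW_append (x : X) (u v : List (Y × X)) :
    wW w L x (u ++ v) = wW w L x u + wW w L (wEnd x u) v := by
  induction u generalizing x with
  | nil => simp [wW, wEnd]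
  | cons q t ih =>
      rcases q with ⟨y, x'⟩
      show (w x' y - w x y - L) + wW w L x' (t ++ v) = _
      rw [ih x']
      show _ = (w x' y - w x y - L) + wW w L x' t + wW w L (wEnd x' t) v
      ring

def toPairs : X → List (Y × X) → List (X × Y)
  | _, [] => []
  | x, (y, x') :: t => (x, y) :: toPairs x' t

def rLast (xf : X) : List (Y × X) → List (Y × X)
  | [] => []
  | (y, x') :: t =>
      match t with
      | [] => [(y, xf)]
      | q :: t' => (y, x') :: rLast xf (q :: t')

lemma chainW_toPairs : ∀ (u : List (Y × X)) (x : X) (a d : X × Y),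
    chainW w L a (toPairs x u ++ [d]) = wW w L a.1 (rLast d.1 ((a.2, x) :: u)) := by
  intro u
  induction u with
  | nil =>
      intro x a d
      show cost w L a d + 0 = (w d.1 a.2 - w a.1 a.2 - L) + 0
      rw [cost]
  | cons q u' ih =>
      rcases q with ⟨y₁, x₁⟩
      intro x a d
      show cost w L a (x, y₁) + chainW w L (x, y₁) (toPairs x₁ u' ++ [d]) = _
      rw [ih x₁ (x, y₁) d]
      show _ = (w x a.2 - w a.1 a.2 - L) + wW w L x (rLast d.1 ((y₁, x₁) :: u'))
      rw [cost]

lemma rLast_self : ∀ (u : List (Y × X)) (x : X), u ≠ [] → rLast (wEnd x u) u = u := by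
  intro u
  induction u with
  | nil => intro x h; exact absurd rfl h
  | cons q t ih =>
      rcases q with ⟨y, x'⟩
      intro x _
      rcases t with _ | ⟨r, t'⟩
      · rfl
      · show (y, x') :: rLast (wEnd x' (r :: t')) (r :: t') = _
        rw [ih x' (by simp)]

section Closed

variable (H : ∀ l : List (X × Y), l ≠ [] →
    (l.map Prod.fst).Nodup → (l.map Prod.snd).Nodup → 0 ≤ cycL w L l)

include H

lemma closed_nonneg (u : List (Y × X)) (x : X) (hu : u ≠ []) (hend : wEnd x u = x) :
    0 ≤ wW w L x u := by
  rcases u with _ | ⟨⟨y₁, x₁⟩, u'⟩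
  · exact absurd rfl hu
  have hcyc : cycL w L (toPairs x ((y₁, x₁) :: u')) = wW w L x ((y₁, x₁) :: u') := by
    show chainW w L (x, y₁) (toPairs x₁ u' ++ [(x, y₁)]) = _
    rw [chainW_toPairs w L u' x₁ (x, y₁) (x, y₁)]
    show wW w L x (rLast x ((y₁, x₁) :: u')) = _
    rw [show x = wEnd x ((y₁, x₁) :: u') from hend.symm]
    rw [rLast_self ((y₁, x₁) :: u') x (by simp)]
  rw [← hcyc]
  exact cycL_nonneg w L H _

lemma short_walk : ∀ (n : ℕ) (u : List (Y × X)) (x0 : X), u.length ≤ n →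
    ∃ u' : List (Y × X),
      wW w L x0 u' ≤ wW w L x0 u ∧ wEnd x0 u' = wEnd x0 u ∧
      (x0 :: u'.map Prod.snd).Nodup ∧
      (∀ z ∈ u'.map Prod.snd, z ∈ u.map Prod.snd) ∧ u'.length ≤ u.length := by
  intro n
  induction n with
  | zero =>
      intro u x0 hu
      rw [Nat.le_zero, List.length_eq_zero_iff] at hu
      subst hu
      exact ⟨[], le_rfl, rfl, by simp, by simp, le_rfl⟩
  | succ n ih =>
      intro u x0 hu
      rcases u with _ | ⟨⟨y, x₁⟩, t⟩
      · exact ⟨[], le_rfl, rfl, by simp, by simp, le_rfl⟩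
      have ht : t.length ≤ n := by simpa using hu
      obtain ⟨t', h1, h2, h3, h4, h5⟩ := ih t x₁ ht
      by_cases hx : x0 ∈ x₁ :: t'.map Prod.snd
      · -- the shortened walk returns to x0; cut the closed prefix
        have hx' : x0 ∈ ((y, x₁) :: t').map Prod.snd := by simpa using hx
        obtain ⟨q, hq, hq2⟩ := List.mem_map.mp hx'
        obtain ⟨v₁, v₂, hsplit⟩ := List.append_of_mem hq
        have hwc : wW w L x0 ((y, x₁) :: t') ≤ wW w L x0 ((y, x₁) :: t) := by
          show (w x₁ y - w x0 y - L) + wW w L x₁ t' ≤ (w x₁ y - w x0 y - L) + wW w L x₁ t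
          linarith
        have hend₁ : wEnd x0 (v₁ ++ [q]) = x0 := by
          rw [wEnd_append]
          show q.2 = x0
          exact hq2
        have hsplit' : ((y, x₁) :: t') = (v₁ ++ [q]) ++ v₂ := by
          rw [hsplit]; simp
        have hw2 : wW w L x0 ((y, x₁) :: t') = wW w L x0 (v₁ ++ [q]) + wW w L x0 v₂ := by
          rw [hsplit', wW_append, hend₁]
        have hc : 0 ≤ wW w L x0 (v₁ ++ [q]) := closed_nonneg w L H _ x0 (by simp) hend₁
        have hend2 : wEnd x0 v₂ = wEnd x0 ((y, x₁) :: t') := by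
          rw [hsplit', wEnd_append, hend₁]
        have hlenv₂ : v₂.length ≤ n := by
          have : ((y, x₁) :: t').length = (v₁ ++ [q]).length + v₂.length := by
            rw [hsplit']; simp; omega
          have h6 : t'.length ≤ n := le_trans h5 ht
          simp at this
          omega
        obtain ⟨u', g1, g2, g3, g4, g5⟩ := ih v₂ x0 hlenv₂
        refine ⟨u', ?_, ?_, g3, ?_, ?_⟩
        · calc wW w L x0 u' ≤ wW w L x0 v₂ := g1
            _ ≤ wW w L x0 ((y, x₁) :: t') := by linarith
            _ ≤ _ := hwc
        · rw [g2, hend2]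
          show wEnd x₁ t' = wEnd x₁ t
          exact h2
        · intro z hz
          have hz2 : z ∈ v₂.map Prod.snd := g4 z hz
          have hz3 : z ∈ ((y, x₁) :: t').map Prod.snd := by
            rw [hsplit]
            simp at hz2 ⊢
            tauto
          simp at hz3
          rcases hz3 with rfl | hz4
          · simp
          · obtain ⟨a, ha⟩ := hz4
            have := h4 z (by simp; exact ⟨a, ha⟩)
            simp at this ⊢
            tauto
        · have : v₂.length ≤ t'.length := by
            have : ((y, x₁) :: t').length = (v₁ ++ [q]).length + v₂.length := by
              rw [hsplit']; simp; omega
            simp at this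
            omega
          simp
          omega
      · refine ⟨(y, x₁) :: t', ?_, ?_, ?_, ?_, ?_⟩
        · show (w x₁ y - w x0 y - L) + wW w L x₁ t' ≤ (w x₁ y - w x0 y - L) + wW w L x₁ t
          linarith
        · exact h2
        · exact List.nodup_cons.mpr ⟨by simpa using hx, by simpa using h3⟩
        · intro z hz
          simp at hz ⊢
          rcases hz with rfl | hz
          · tauto
          · have := h4 z (by simpa using hz)
            simp at this
            tauto
        · simpa using h5

end Closed

lemma exists_potential {X Y : Type*} [Fintype X] [Fintype Y] [Nonempty X] [Nonempty Y]
    (w : X → Y → ℝ) (L : ℝ)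
    (H : ∀ l : List (X × Y), l ≠ [] →
      (l.map Prod.fst).Nodup → (l.map Prod.snd).Nodup → 0 ≤ cycL w L l) :
    ∃ (a : X → ℝ) (b : Y → ℝ), ∀ x y, (w x y + L ≤ a x + b y) ∧ (a x + b y ≤ w x y) := by
  classical
  obtain ⟨x0⟩ := (inferInstance : Nonempty X)
  obtain ⟨y0⟩ := (inferInstance : Nonempty Y)
  -- bound on a single step
  set K : ℝ := max 0 (Finset.sup' Finset.univ ⟨(x0, x0, y0), Finset.mem_univ _⟩
    (fun t : X × X × Y => w t.1 t.2.2 - w t.2.1 t.2.2 + L)) with hK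
  have hK0 : 0 ≤ K := le_max_left _ _
  have hstep : ∀ (x x' : X) (y : Y), -K ≤ w x' y - w x y - L := by
    intro x x' y
    have h1 : w x y - w x' y + L ≤ K := by
      refine le_trans ?_ (le_max_right _ _)
      exact Finset.le_sup' (f := fun t : X × X × Y => w t.1 t.2.2 - w t.2.1 t.2.2 + L)
        (Finset.mem_univ (x, x', y))
    linarith
  have hwW_ge : ∀ (u : List (Y × X)) (x : X), -((u.length : ℝ) * K) ≤ wW w L x u := by
    intro u
    induction u with
    | nil => intro x; simp [wW]
    | cons q t ih =>
        rcases q with ⟨y, x'⟩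
        intro x
        have := ih x'
        have h2 := hstep x x' y
        have h3 : wW w L x ((y, x') :: t) = (w x' y - w x y - L) + wW w L x' t := rfl
        rw [h3, List.length_cons]
        push_cast
        nlinarith
  set C : ℝ := (Fintype.card X : ℝ) * K with hC
  set WS : X → Set ℝ := fun x => {r : ℝ | ∃ u, wEnd x0 u = x ∧ r = wW w L x0 u} with hWS
  have hne : ∀ x, (WS x).Nonempty := by
    intro x
    exact ⟨wW w L x0 [(y0, x)], [(y0, x)], rfl, rfl⟩
  have hbdd : ∀ x, ∀ r ∈ WS x, -C ≤ r := by
    rintro x r ⟨u, hu, rfl⟩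
    obtain ⟨u', g1, g2, g3, g4, g5⟩ := short_walk w L H u.length u x0 le_rfl
    have hlen : u'.length + 1 ≤ Fintype.card X := by
      have := List.Nodup.length_le_card g3
      simpa using this
    have h1 : -((u'.length : ℝ) * K) ≤ wW w L x0 u' := hwW_ge u' x0
    have h2 : (u'.length : ℝ) * K ≤ C := by
      rw [hC]
      have : (u'.length : ℝ) ≤ (Fintype.card X : ℝ) := by
        exact_mod_cast Nat.le_of_succ_le hlen
      nlinarith
    linarith
  have hbdd' : ∀ x, BddBelow (WS x) := fun x => ⟨-C, fun r hr => hbdd x r hr⟩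
  set A : X → ℝ := fun x => sInf (WS x) with hA
  have hrelax : ∀ (x x' : X) (y : Y), A x' ≤ A x + (w x' y - w x y - L) := by
    intro x x' y
    have hlb : ∀ r ∈ WS x, A x' - (w x' y - w x y - L) ≤ r := by
      rintro r ⟨u, hu, rfl⟩
      have hmem : wW w L x0 (u ++ [(y, x')]) ∈ WS x' :=
        ⟨u ++ [(y, x')], by rw [wEnd_append, hu]; rfl, rfl⟩
      have hle := csInf_le (hbdd' x') hmem
      rw [wW_append] at hle
      have : wW w L (wEnd x0 u) [(y, x')] = w x' y - w (wEnd x0 u) y - L := by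
        simp [wW]
      rw [this, hu] at hle
      linarith
    have := le_csInf (hne x) hlb
    linarith
  set b : Y → ℝ := fun y => Finset.inf' Finset.univ ⟨x0, Finset.mem_univ _⟩
    (fun x' => w x' y - A x') with hb
  refine ⟨A, b, fun x y => ⟨?_, ?_⟩⟩
  · obtain ⟨x', _, hx'⟩ := Finset.exists_mem_eq_inf' (s := Finset.univ)
      ⟨x0, Finset.mem_univ _⟩ (fun x' => w x' y - A x')
    have := hrelax x x' y
    rw [hb]
    simp only
    rw [hx']
    linarith
  · have : b y ≤ w x y - A x := Finset.inf'_le _ (Finset.mem_univ x)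
    linarith

/-! ### analytic and linear algebra helpers -/

lemma rpow_helper1 (m : ℕ) (c N D : ℝ) (hc : 0 ≤ c) (hD : 0 < D)
    (h : c ^ (m + 1) * D ≤ N) : c ≤ (N / D) ^ (1 / (m + 1 : ℝ)) := by
  have hND : c ^ (m + 1) ≤ N / D := (le_div_iff₀ hD).mpr h
  have h0 : (0 : ℝ) ≤ c ^ (m + 1) := pow_nonneg hc _
  have hexp : (0:ℝ) ≤ 1 / (m + 1 : ℝ) := by positivity
  have hmono := Real.rpow_le_rpow h0 hND hexp
  have hid : (c ^ (m + 1)) ^ (1 / (m + 1 : ℝ)) = c := by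
    rw [show (1 / (m + 1 : ℝ)) = ((m + 1 : ℕ) : ℝ)⁻¹ by push_cast; rw [one_div]]
    exact Real.pow_rpow_inv_natCast hc (Nat.succ_ne_zero m)
  rwa [hid] at hmono

lemma rpow_helper2 (m : ℕ) (c N D : ℝ) (hc : 0 ≤ c) (hD : 0 < D) (hN : 0 ≤ N)
    (h : c ≤ (N / D) ^ (1 / (m + 1 : ℝ))) : c ^ (m + 1) * D ≤ N := by
  have h1 : c ^ (m + 1) ≤ ((N / D) ^ (1 / (m + 1 : ℝ))) ^ (m + 1) :=
    pow_le_pow_left₀ hc h _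
  have hid : ((N / D) ^ (1 / (m + 1 : ℝ))) ^ (m + 1) = N / D := by
    rw [show (1 / (m + 1 : ℝ)) = ((m + 1 : ℕ) : ℝ)⁻¹ by push_cast; rw [one_div]]
    exact Real.rpow_inv_natCast_pow (div_nonneg hN hD.le) (Nat.succ_ne_zero m)
  rw [hid] at h1
  exact (le_div_iff₀ hD).mp h1

lemma rank_le_one_factor {X Y : Type*} [Fintype X] [Fintype Y] [DecidableEq Y]
    (M : Matrix X Y ℝ) (h : M.rank ≤ 1) : ∃ (u : X → ℝ) (v : Y → ℝ),
    ∀ x y, M x y = u x * v y := by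
  classical
  rw [Matrix.rank] at h
  obtain ⟨v0, hv0⟩ := finrank_le_one_iff.mp h
  have hcol : ∀ y, ∃ c : ℝ, c • v0 = ⟨M.mulVec (Pi.single y 1),
      LinearMap.mem_range_self M.mulVecLin (Pi.single y 1)⟩ := fun y => hv0 _
  choose v hv using hcol
  refine ⟨fun x => (v0 : X → ℝ) x, v, fun x y => ?_⟩
  have h1 : M.mulVec (Pi.single y 1) = fun x => M x y * 1 := Matrix.mulVec_single M y 1
  have h2 : ((v y • v0 : LinearMap.range M.mulVecLin) : X → ℝ) = M.mulVec (Pi.single y 1) := by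
    rw [hv y]
  have h3 : ((v y • v0 : LinearMap.range M.mulVecLin) : X → ℝ) x = v y * (v0 : X → ℝ) x := rfl
  have h4 : M.mulVec (Pi.single y 1) x = M x y := by rw [h1]; simp
  rw [← h4, ← h2, h3]
  ring

lemma rank_prod_le_one {X Y : Type*} [Fintype X] [Fintype Y] (u : X → ℝ) (v : Y → ℝ) :
    (Matrix.of fun x y => u x * v y).rank ≤ 1 := by
  have heq : (Matrix.of fun x y => u x * v y) = Matrix.replicateCol Unit u * Matrix.replicateRow Unit v := by
    ext x y
    simp [Matrix.mul_apply, Matrix.replicateCol, Matrix.replicateRow]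
  rw [heq]
  refine le_trans (Matrix.rank_mul_le_left _ _) ?_
  simpa using Matrix.rank_le_card_width (Matrix.replicateCol Unit u)

lemma iInf_le_pathValue {X Y : Type*} [Fintype X] [Fintype Y] (p : X × Y → ℝ)
    (hp : IsPMF p) (δ : X → Y → ℝ) (hδ : ∀ x y, δ x y ∈ Set.Icc (0 : ℝ) 1)
    (hrank : (Matrix.of fun x y => p (x, y) * δ x y).rank ≤ 1)
    {m : ℕ} (x : Fin (m + 1) → X) (y : Fin (m + 1) → Y)
    (hadm : IsAdmissiblePath p x y) :
    (⨅ xy : X × Y, δ xy.1 xy.2) ≤ pathValue p x y := by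
  classical
  haveI : Nonempty X := ⟨x 0⟩
  haveI : Nonempty Y := ⟨y 0⟩
  obtain ⟨u, v, huv⟩ := rank_le_one_factor (Matrix.of fun a b => p (a, b) * δ a b) hrank
  have huv' : ∀ a b, p (a, b) * δ a b = u a * v b := fun a b => huv a b
  set c := ⨅ xy : X × Y, δ xy.1 xy.2 with hc
  have hbdd : BddBelow (Set.range fun xy : X × Y => δ xy.1 xy.2) := by
    refine ⟨0, ?_⟩
    rintro r ⟨xy, rfl⟩
    exact (hδ _ _).1
  have hc0 : 0 ≤ c := le_ciInf fun xy => (hδ _ _).1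
  have hcle : ∀ a b, c ≤ δ a b := fun a b => ciInf_le hbdd (a, b)
  have hDpos : 0 < ∏ i, p (x i, y (i - 1)) := Finset.prod_pos fun i _ => hadm.2.2 i
  have s1 : ∏ i, (p (x i, y i) * δ (x i) (y i)) ≤ ∏ i, p (x i, y i) := by
    refine Finset.prod_le_prod (fun i _ => mul_nonneg (hp.1 _) (hδ _ _).1) ?_
    intro i _
    exact mul_le_of_le_one_right (hp.1 _) (hδ _ _).2
  have s2 : ∏ i, (p (x i, y i) * δ (x i) (y i))
      = ∏ i, (p (x i, y (i - 1)) * δ (x i) (y (i - 1))) := by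
    rw [Finset.prod_congr rfl (fun i _ => huv' (x i) (y i)),
      Finset.prod_congr rfl (fun i _ => huv' (x i) (y (i - 1))),
      Finset.prod_mul_distrib, Finset.prod_mul_distrib]
    congr 1
    exact (Equiv.prod_comp (Equiv.subRight (1 : Fin (m + 1))) (fun i => v (y i))).symm
  have s3 : ∏ i, (p (x i, y (i - 1)) * c)
      ≤ ∏ i, (p (x i, y (i - 1)) * δ (x i) (y (i - 1))) := by
    refine Finset.prod_le_prod (fun i _ => mul_nonneg (hadm.2.2 i).le hc0) ?_
    intro i _
    exact mul_le_mul_of_nonneg_left (hcle _ _) (hadm.2.2 i).le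
  have s4 : ∏ i, (p (x i, y (i - 1)) * c) = (∏ i, p (x i, y (i - 1))) * c ^ (m + 1) := by
    rw [Finset.prod_mul_distrib, Finset.prod_const, Finset.card_univ, Fintype.card_fin]
  have hkey : c ^ (m + 1) * (∏ i, p (x i, y (i - 1))) ≤ ∏ i, p (x i, y i) := by
    rw [mul_comm]
    calc (∏ i, p (x i, y (i - 1))) * c ^ (m + 1)
        = ∏ i, (p (x i, y (i - 1)) * c) := s4.symm
      _ ≤ ∏ i, (p (x i, y (i - 1)) * δ (x i) (y (i - 1))) := s3
      _ = ∏ i, (p (x i, y i) * δ (x i) (y i)) := s2.symm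
      _ ≤ ∏ i, p (x i, y i) := s1
  unfold pathValue
  exact rpow_helper1 m c _ _ hc0 hDpos hkey

end Eps1Aux

open Eps1Aux

/-- for a pmf `p` on `X × Y` with strictly positive marginals, `ε₁(p)` is
the maximum, over `δ : X×Y → [0,1]` such that the matrix `[p(x,y)·δ(x,y)]` has rank at
most one, of `min_{(x,y)} δ(x,y)`. -/
theorem eps1_eq_max_min_delta {X Y : Type*} [Fintype X] [Fintype Y]
    (p : X × Y → ℝ) (hp : IsPMF p)
    (hX : ∀ x, 0 < ∑ y, p (x, y)) (hY : ∀ y, 0 < ∑ x, p (x, y)) :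
    IsGreatest { v : ℝ | ∃ δ : X → Y → ℝ,
      (∀ x y, δ x y ∈ Set.Icc (0 : ℝ) 1) ∧
      (Matrix.of fun x y => p (x, y) * δ x y).rank ≤ 1 ∧
      v = ⨅ xy : X × Y, δ xy.1 xy.2 } (eps1 p) := by
  classical
  obtain ⟨s₀, hs₀⟩ : ∃ s : X × Y, 0 < p s := by
    by_contra hcon
    push_neg at hcon
    have h1 : ∑ s, p s ≤ 0 := Finset.sum_nonpos fun s _ => hcon s
    rw [hp.2] at h1
    linarith
  haveI : Nonempty X := ⟨s₀.1⟩
  haveI : Nonempty Y := ⟨s₀.2⟩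
  set Sset := { v : ℝ | ∃ (m : ℕ) (x : Fin (m + 1) → X) (y : Fin (m + 1) → Y),
    IsAdmissiblePath p x y ∧ v = pathValue p x y } with hSset
  have heps : eps1 p = sInf Sset := rfl
  have hSne : Sset.Nonempty := by
    refine ⟨pathValue p (fun _ : Fin 1 => s₀.1) (fun _ => s₀.2), 0, _, _, ⟨?_, ?_, ?_⟩, rfl⟩
    · intro i j _; omega
    · intro i j _; omega
    · intro i; simpa using hs₀
  have hS0 : ∀ v ∈ Sset, (0 : ℝ) ≤ v := by
    rintro v ⟨m, x, y, hadm, rfl⟩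
    unfold pathValue
    refine Real.rpow_nonneg ?_ _
    exact div_nonneg (Finset.prod_nonneg fun i _ => hp.1 _)
      (Finset.prod_nonneg fun i _ => (hadm.2.2 i).le)
  have hSbdd : BddBelow Sset := ⟨0, hS0⟩
  constructor
  · -- eps1 p is attained by some δ
    show ∃ δ : X → Y → ℝ, _
    by_cases hpos : ∀ s : X × Y, 0 < p s
    · -- strictly positive case
      set pm := Finset.inf' Finset.univ (Finset.univ_nonempty) p with hpm
      have hpm0 : 0 < pm := by
        rw [hpm, Finset.lt_inf'_iff]
        exact fun s _ => hpos s
      have hple1 : ∀ s : X × Y, p s ≤ 1 := by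
        intro s
        rw [← hp.2]
        exact Finset.single_le_sum (fun s _ => hp.1 s) (Finset.mem_univ s)
      have heps_lb : pm ≤ eps1 p := by
        rw [heps]
        refine le_csInf hSne ?_
        rintro r ⟨m, x, y, hadm, rfl⟩
        have hDpos : 0 < ∏ i, p (x i, y (i - 1)) := Finset.prod_pos fun i _ => hadm.2.2 i
        unfold pathValue
        refine rpow_helper1 m pm _ _ hpm0.le hDpos ?_
        have h1 : pm ^ (m + 1) ≤ ∏ i, p (x i, y i) := by
          calc pm ^ (m + 1) = ∏ _i : Fin (m + 1), pm := by
                rw [Finset.prod_const, Finset.card_univ, Fintype.card_fin]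
            _ ≤ ∏ i, p (x i, y i) :=
                Finset.prod_le_prod (fun i _ => hpm0.le)
                  (fun i _ => Finset.inf'_le _ (Finset.mem_univ _))
        have h2 : ∏ i, p (x i, y (i - 1)) ≤ 1 :=
          Finset.prod_le_one (fun i _ => (hadm.2.2 i).le) (fun i _ => hple1 _)
        have h3 : 0 ≤ pm ^ (m + 1) := pow_nonneg hpm0.le _
        nlinarith
      have heps_pos : 0 < eps1 p := lt_of_lt_of_le hpm0 heps_lb
      set w : X → Y → ℝ := fun a b => Real.log (p (a, b)) with hw
      set L : ℝ := Real.log (eps1 p) with hL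
      -- the path inequality, in additive (log) form
      have PATHI : ∀ (n : ℕ) (x : Fin (n + 1) → X) (y : Fin (n + 1) → Y),
          Function.Injective x → Function.Injective y →
          ((n + 1 : ℕ) : ℝ) * L + ∑ i, w (x i) (y i) ≤ ∑ i, w (x (i + 1)) (y i) := by
        intro n x y hxinj hyinj
        set X' : Fin (n + 1) → X := fun i => x (-i) with hX'
        set Y' : Fin (n + 1) → Y := fun i => y (-(i + 1)) with hY'
        have hadm : IsAdmissiblePath p X' Y' := by
          refine ⟨?_, ?_, fun i => hpos _⟩
          · intro i j hij
            have := hxinj hij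
            exact neg_injective this
          · intro i j hij
            have h1 : -(i + 1) = -(j + 1) := hyinj hij
            have h2 : i + 1 = j + 1 := neg_injective h1
            exact add_right_cancel h2
        have hmem : pathValue p X' Y' ∈ Sset := ⟨n, X', Y', hadm, rfl⟩
        have hle : eps1 p ≤ pathValue p X' Y' := by
          rw [heps]; exact csInf_le hSbdd hmem
        have hNpos : 0 < ∏ i, p (X' i, Y' i) := Finset.prod_pos fun i _ => hpos _
        have hDpos : 0 < ∏ i, p (X' i, Y' (i - 1)) := Finset.prod_pos fun i _ => hpos _
        have hexp : (eps1 p) ^ (n + 1) * (∏ i, p (X' i, Y' (i - 1)))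
            ≤ ∏ i, p (X' i, Y' i) := by
          refine rpow_helper2 n (eps1 p) _ _ heps_pos.le hDpos hNpos.le ?_
          exact hle
        -- reindex the two products
        have hN : ∏ i, p (X' i, Y' i) = ∏ j, p (x (j + 1), y j) := by
          have := Equiv.prod_comp ((Equiv.addRight (1 : Fin (n + 1))).trans
            (Equiv.neg (Fin (n + 1)))) (fun j => p (x (j + 1), y j))
          rw [← this]
          refine Finset.prod_congr rfl ?_
          intro i _
          show p (X' i, Y' i) = p (x (-(i + 1) + 1), y (-(i + 1)))
          rw [hX', hY']
          congr 2
          · show x (-i) = x (-(i + 1) + 1)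
            congr 1
            abel
        have hD : ∏ i, p (X' i, Y' (i - 1)) = ∏ j, p (x j, y j) := by
          have := Equiv.prod_comp (Equiv.neg (Fin (n + 1))) (fun j => p (x j, y j))
          rw [← this]
          refine Finset.prod_congr rfl ?_
          intro i _
          show p (X' i, Y' (i - 1)) = p (x (-i), y (-i))
          rw [hX', hY']
          congr 2
          show y (-(i - 1 + 1)) = y (-i)
          congr 1
          abel
        rw [hN, hD] at hexp
        -- take logs
        have hNpos' : 0 < ∏ j, p (x (j + 1), y j) := Finset.prod_pos fun i _ => hpos _
        have hDpos' : 0 < ∏ j, p (x j, y j) := Finset.prod_pos fun i _ => hpos _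
        have hlog := Real.log_le_log
          (mul_pos (pow_pos heps_pos (n + 1)) hDpos') hexp
        rw [Real.log_mul (pow_pos heps_pos (n + 1)).ne' hDpos'.ne', Real.log_pow,
          Real.log_prod (fun i _ => (hpos _).ne'),
          Real.log_prod (fun i _ => (hpos _).ne')] at hlog
        have hwsum : ∀ (f : Fin (n+1) → X) (g : Fin (n+1) → Y),
            (∑ i, Real.log (p (f i, g i))) = ∑ i, w (f i) (g i) := by
          intro f g
          rfl
        calc ((n + 1 : ℕ) : ℝ) * L + ∑ i, w (x i) (y i)
            = ((n + 1 : ℕ) : ℝ) * Real.log (eps1 p) + ∑ i, Real.log (p (x i, y i)) := rfl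
          _ ≤ ∑ i, Real.log (p (x (i + 1), y i)) := by linarith
          _ = ∑ i, w (x (i + 1)) (y i) := rfl
      -- the hypothesis for the cycle machinery
      have H : ∀ l : List (X × Y), l ≠ [] →
          (l.map Prod.fst).Nodup → (l.map Prod.snd).Nodup → 0 ≤ cycL w L l := by
        intro l hl hnx hny
        rcases l with _ | ⟨q, mrest⟩
        · exact absurd rfl hl
        set n := mrest.length with hn
        set g : Fin (n + 1) → X × Y := (q :: mrest).get with hg
        have hofn : q :: mrest = List.ofFn g := (List.ofFn_get _).symm
        rw [hofn, cycL_ofFn w L n g]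
        have hxinj : Function.Injective (Prod.fst ∘ g) := by
          rw [← List.nodup_ofFn]
          rw [← List.map_ofFn, ← hofn]
          exact hnx
        have hyinj : Function.Injective (Prod.snd ∘ g) := by
          rw [← List.nodup_ofFn]
          rw [← List.map_ofFn, ← hofn]
          exact hny
        have hineq := PATHI n (Prod.fst ∘ g) (Prod.snd ∘ g) hxinj hyinj
        have hsum : ∑ i, cost w L (g i) (g (i + 1))
            = (∑ i, w ((Prod.fst ∘ g) (i + 1)) ((Prod.snd ∘ g) i))
              - (∑ i, w ((Prod.fst ∘ g) i) ((Prod.snd ∘ g) i))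
              - ((n + 1 : ℕ) : ℝ) * L := by
          have hterm : ∀ i : Fin (n + 1), cost w L (g i) (g (i + 1))
              = (w ((Prod.fst ∘ g) (i + 1)) ((Prod.snd ∘ g) i)
                - w ((Prod.fst ∘ g) i) ((Prod.snd ∘ g) i)) - L := fun i => rfl
          rw [Finset.sum_congr rfl fun i _ => hterm i]
          rw [Finset.sum_sub_distrib, Finset.sum_sub_distrib, Finset.sum_const,
            Finset.card_univ, Fintype.card_fin, nsmul_eq_mul]
        rw [hsum]
        linarith
      obtain ⟨a, b, hab⟩ := exists_potential w L H
      set u : X → ℝ := fun x => Real.exp (a x) with hu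
      set v : Y → ℝ := fun y => Real.exp (b y) with hv
      set δ : X → Y → ℝ := fun x y => u x * v y / p (x, y) with hδdef
      have hlow : ∀ x y, eps1 p * p (x, y) ≤ u x * v y := by
        intro x y
        have h1 := (hab x y).1
        have h2 : Real.exp (w x y + L) ≤ Real.exp (a x + b y) := Real.exp_le_exp.mpr h1
        rw [Real.exp_add, Real.exp_add] at h2
        rw [hw] at h2
        simp only at h2
        rw [Real.exp_log (hpos (x, y)), hL, Real.exp_log heps_pos] at h2
        calc eps1 p * p (x, y) = p (x, y) * eps1 p := mul_comm _ _
          _ ≤ u x * v y := h2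
      have hhigh : ∀ x y, u x * v y ≤ p (x, y) := by
        intro x y
        have h1 := (hab x y).2
        have h2 : Real.exp (a x + b y) ≤ Real.exp (w x y) := Real.exp_le_exp.mpr h1
        rw [Real.exp_add] at h2
        rw [hw] at h2
        simp only at h2
        rw [Real.exp_log (hpos (x, y))] at h2
        exact h2
      have hIcc : ∀ x y, δ x y ∈ Set.Icc (0 : ℝ) 1 := by
        intro x y
        constructor
        · exact div_nonneg (mul_nonneg (Real.exp_pos _).le (Real.exp_pos _).le) (hpos _).le
        · rw [div_le_one (hpos _)]
          exact hhigh x y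
      have hMeq : (Matrix.of fun x y => p (x, y) * δ x y)
          = Matrix.of fun x y => u x * v y := by
        ext x y
        show p (x, y) * (u x * v y / p (x, y)) = u x * v y
        rw [mul_comm (p (x, y)) _, div_mul_eq_mul_div, mul_div_assoc,
          div_self (hpos (x, y)).ne', mul_one]
      have hrank : (Matrix.of fun x y => p (x, y) * δ x y).rank ≤ 1 := by
        rw [hMeq]
        exact rank_prod_le_one u v
      refine ⟨δ, hIcc, hrank, ?_⟩
      refine le_antisymm ?_ ?_
      · refine le_ciInf ?_
        rintro ⟨x, y⟩
        show eps1 p ≤ δ x y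
        rw [hδdef]
        simp only
        rw [le_div_iff₀ (hpos (x, y))]
        exact hlow x y
      · rw [heps]
        refine le_csInf hSne ?_
        rintro r ⟨m, x, y, hadm, rfl⟩
        exact iInf_le_pathValue p hp δ hIcc hrank x y hadm
    · -- p has a zero entry: eps1 p = 0
      push_neg at hpos
      obtain ⟨s₁, hs₁⟩ := hpos
      have hs₁0 : p s₁ = 0 := le_antisymm hs₁ (hp.1 s₁)
      obtain ⟨x₁, y₁⟩ := s₁
      obtain ⟨x₂, hx₂⟩ : ∃ x₂, 0 < p (x₂, y₁) := by
        by_contra hcon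
        push_neg at hcon
        have h1 : ∑ x, p (x, y₁) ≤ 0 := Finset.sum_nonpos fun x _ => hcon x
        linarith [hY y₁]
      obtain ⟨y₂, hy₂⟩ : ∃ y₂, 0 < p (x₁, y₂) := by
        by_contra hcon
        push_neg at hcon
        have h1 : ∑ y, p (x₁, y) ≤ 0 := Finset.sum_nonpos fun y _ => hcon y
        linarith [hX x₁]
      have hxne : x₁ ≠ x₂ := by
        rintro rfl
        rw [hs₁0] at hx₂
        exact lt_irrefl _ hx₂
      have hyne : y₁ ≠ y₂ := by
        rintro rfl
        rw [hs₁0] at hy₂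
        exact lt_irrefl _ hy₂
      have hzero_mem : (0 : ℝ) ∈ Sset := by
        refine ⟨1, ![x₁, x₂], ![y₁, y₂], ⟨?_, ?_, ?_⟩, ?_⟩
        · intro i j hij
          fin_cases i <;> fin_cases j <;> simp_all
        · intro i j hij
          fin_cases i <;> fin_cases j <;> simp_all
        · intro i
          fin_cases i
          · simpa [show ((0 : Fin 2) - 1) = 1 by decide] using hy₂
          · simpa [show ((1 : Fin 2) - 1) = 0 by decide] using hx₂
        · unfold pathValue
          rw [Fin.prod_univ_two]
          simp only [Matrix.cons_val_zero, Matrix.cons_val_one, Matrix.head_cons]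
          rw [hs₁0, zero_mul, zero_div]
          rw [Real.zero_rpow (by norm_num)]
      have heps0 : eps1 p = 0 := by
        rw [heps]
        exact le_antisymm (csInf_le hSbdd hzero_mem) (le_csInf hSne hS0)
      refine ⟨fun _ _ => 0, by simp, ?_, ?_⟩
      · have hM0 : (Matrix.of fun x y => p (x, y) * (0 : ℝ)) = (0 : Matrix X Y ℝ) := by
          ext x y; simp
        rw [hM0, Matrix.rank_zero]
        norm_num
      · rw [heps0, ciInf_const]
  · -- upper bound
    rintro r ⟨δ, hδ, hrank, rfl⟩
    rw [heps]
    refine le_csInf hSne ?_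
    rintro r ⟨m, x, y, hadm, rfl⟩
    exact iInf_le_pathValue p hp δ hδ hrank x y hadm
end

section
/- Let p be a pmf on X×Y (X, Y finite) with p(x,y) > 0 for all (x,y). Define F(p) as the minimum, over all product pmfs q(x,y) = q_X(x)·q_Y(y) on X×Y, of ( max_{x,y} p(x,y)/q(x,y) )·( max_{x,y} q(x,y)/p(x,y) ), with the convention c/0 = +∞ for c > 0. Then F(p) = 1/ε₁(p). -/
section Basics

variable {X Y : Type*} [Fintype X] [Fintype Y] (p : X × Y → ℝ)

def pathSet : Set ℝ := { v : ℝ | ∃ (m : ℕ) (x : Fin (m + 1) → X) (y : Fin (m + 1) → Y),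
    IsAdmissiblePath p x y ∧ v = pathValue p x y }

lemma eps1_eq : eps1 p = sInf (pathSet p) := rfl

variable {p}

lemma nonempty_of_pmf (hp : IsPMF p) : Nonempty X ∧ Nonempty Y := by
  by_contra h
  have : IsEmpty (X × Y) := by
    rcases not_and_or.mp h with h | h
    · have := not_nonempty_iff.mp h
      infer_instance
    · have := not_nonempty_iff.mp h
      infer_instance
  have := hp.2
  rw [Finset.sum_of_isEmpty] at this
  norm_num at this

lemma nonemptyXY (hp : IsPMF p) : Nonempty (X × Y) := by
  obtain ⟨⟨x⟩, ⟨y⟩⟩ := nonempty_of_pmf hp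
  exact ⟨(x, y)⟩

lemma p_le_one (hp : IsPMF p) (s : X × Y) : p s ≤ 1 := by
  have := Finset.single_le_sum (f := p) (fun i _ => hp.1 i) (Finset.mem_univ s)
  rw [hp.2] at this
  exact this

lemma pathSet_nonempty (hp : IsPMF p) (hpos : ∀ s, 0 < p s) : (pathSet p).Nonempty := by
  obtain ⟨hX, hY⟩ := nonempty_of_pmf hp
  obtain ⟨x0⟩ := hX; obtain ⟨y0⟩ := hY
  haveI : Subsingleton (Fin (0+1)) := ⟨fun a b => Fin.ext (by omega)⟩
  exact ⟨_, 0, fun _ => x0, fun _ => y0,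
    ⟨Function.injective_of_subsingleton _, Function.injective_of_subsingleton _,
      fun _ => hpos _⟩, rfl⟩

lemma pathSet_bddBelow (hpos : ∀ s, 0 < p s) : BddBelow (pathSet p) := by
  refine ⟨0, ?_⟩
  rintro v ⟨m, x, y, hadm, rfl⟩
  exact Real.rpow_nonneg (div_nonneg (Finset.prod_nonneg fun i _ => (hpos _).le)
    (Finset.prod_nonneg fun i _ => (hpos _).le)) _

lemma eps1_le (hpos : ∀ s, 0 < p s) {v : ℝ} (hv : v ∈ pathSet p) : eps1 p ≤ v :=
  csInf_le (pathSet_bddBelow hpos) hv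

lemma pathValue_ge_delta (hp : IsPMF p) (hpos : ∀ s, 0 < p s)
    {δ : ℝ} (hδpos : 0 < δ) (hδle : ∀ s, δ ≤ p s)
    {m : ℕ} (x : Fin (m+1) → X) (y : Fin (m+1) → Y) :
    δ ≤ pathValue p x y := by
  set N := ∏ i, p (x i, y i) with hN
  set D := ∏ i, p (x i, y (i-1)) with hD
  have hDpos : 0 < D := Finset.prod_pos fun i _ => hpos _
  have hD1 : D ≤ 1 := Finset.prod_le_one (fun i _ => (hpos _).le) (fun i _ => p_le_one hp _)
  have hNδ : δ ^ (m+1) ≤ N := by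
    have h1 : δ ^ (m+1) = ∏ _i : Fin (m+1), δ := by
      simp [Finset.prod_const]
    rw [h1, hN]
    exact Finset.prod_le_prod (fun i _ => hδpos.le) (fun i _ => hδle _)
  have hND : δ ^ (m+1) ≤ N / D := by
    calc δ ^ (m+1) ≤ N := hNδ
      _ = N / 1 := (div_one N).symm
      _ ≤ N / D := by
        apply div_le_div_of_nonneg_left ?_ hDpos hD1
        exact le_trans (by positivity) hNδ
  calc δ = (δ ^ (m+1 : ℕ)) ^ (1/(m+1:ℝ)) := by
        rw [← Real.rpow_natCast δ (m+1), ← Real.rpow_mul hδpos.le]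
        push_cast
        rw [mul_one_div, div_self (by positivity), Real.rpow_one]
    _ ≤ (N / D) ^ (1/(m+1:ℝ)) :=
        Real.rpow_le_rpow (by positivity) hND (by positivity)
    _ = pathValue p x y := rfl

lemma eps1_pos (hp : IsPMF p) (hpos : ∀ s, 0 < p s) : 0 < eps1 p := by
  have hne : (Finset.univ : Finset (X × Y)).Nonempty :=
    Finset.univ_nonempty_iff.mpr (nonemptyXY hp)
  obtain ⟨s0, _, hs⟩ := Finset.exists_mem_eq_inf' hne p
  set δ := Finset.univ.inf' hne p with hδ
  have hδpos : 0 < δ := by rw [hs]; exact hpos s0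
  have : δ ≤ eps1 p := by
    apply le_csInf (pathSet_nonempty hp hpos)
    rintro v ⟨m, x, y, hadm, rfl⟩
    exact pathValue_ge_delta hp hpos hδpos (fun s => Finset.inf'_le _ (Finset.mem_univ s)) x y
  linarith

end Basics
open scoped Fin.NatCast Fin.CommRing in
lemma cycle_split {Z : Type*} (T : Z → Z → ℝ) {m : ℕ} (z : Fin (m+1) → Z)
    {i j : Fin (m+1)} (hij : i ≠ j) (hT : ∀ w, T w (z i) = T w (z j)) :
    ∃ (m1 m2 : ℕ) (z1 : Fin (m1+1) → Z) (z2 : Fin (m2+1) → Z),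
      m1 + m2 + 1 = m ∧
      ∑ l, T (z l) (z (l-1)) =
        (∑ l, T (z1 l) (z1 (l-1))) + ∑ l, T (z2 l) (z2 (l-1)) := by
  have hji : j - i ≠ 0 := sub_ne_zero.mpr (Ne.symm hij)
  set t1 : ℕ := ((j - i : Fin (m+1)) : ℕ) with ht1
  have ht1pos : 1 ≤ t1 := by
    rcases Nat.eq_zero_or_pos t1 with h | h
    · exact absurd (Fin.ext (by simp only [Fin.val_zero]; omega)) hji
    · exact h
  have ht1le : t1 ≤ m := by
    have := (j - i).isLt
    omega
  set m1 : ℕ := t1 - 1 with hm1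
  set m2 : ℕ := m - t1 with hm2
  have e1 : m1 + 1 = t1 := by omega
  have e2 : (m1 + 1) + (m2 + 1) = m + 1 := by omega
  set f : ℕ → ℝ := fun c => T (z (i + 1 + (c : Fin (m+1)))) (z (i + (c : Fin (m+1)))) with hf
  have hS : ∑ l, T (z l) (z (l-1)) = ∑ c ∈ Finset.range (m+1), f c := by
    rw [← Fin.sum_univ_eq_sum_range f (m+1)]
    refine (Fintype.sum_equiv (Equiv.addLeft (i+1)) _ _ ?_).symm
    intro c
    simp only [hf, Fin.cast_val_eq_self, Equiv.coe_addLeft]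
    rw [show i + 1 + c - 1 = i + c from by abel]
  have hsplit : ∑ c ∈ Finset.range (m+1), f c =
      (∑ l : Fin (m1+1), f l) + ∑ l : Fin (m2+1), f (t1 + l) := by
    rw [← Fin.sum_univ_eq_sum_range f (m+1)]
    have key := Fin.sum_univ_add (a := m1+1) (b := m2+1) (fun l => f (l : ℕ))
    rw [Fintype.sum_equiv (finCongr e2.symm) (fun l : Fin (m+1) => f (l:ℕ))
      (fun l : Fin ((m1+1)+(m2+1)) => f (l:ℕ)) (by intro x; simp), key]
    congr 1
    exact Finset.sum_congr rfl (by intro l _; rw [Fin.coe_natAdd, e1])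
  refine ⟨m1, m2, fun l => z (i + 1 + ((l : ℕ) : Fin (m+1))),
    fun l => z (j + 1 + ((l : ℕ) : Fin (m+1))), by omega, ?_⟩
  rw [hS, hsplit]
  have hij' : i + ((t1 : ℕ) : Fin (m+1)) = j := by
    rw [ht1, Fin.cast_val_eq_self]; abel
  congr 1
  · -- first block
    refine Finset.sum_congr rfl ?_
    intro l _
    simp only [hf]
    by_cases hl : l = 0
    · subst hl
      have hv : ((0 - 1 : Fin (m1+1)) : ℕ) = m1 := by
        rw [Fin.coe_sub_one]; simp
      have hj : i + 1 + ((m1 : ℕ) : Fin (m+1)) = j := by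
        rw [show ((m1:ℕ) : Fin (m+1)) = ((t1:ℕ) : Fin (m+1)) - 1 from by
          rw [← e1]; push_cast; ring]
        rw [← hij']; abel
      rw [hv]
      simp only [Fin.val_zero, Nat.cast_zero, add_zero]
      rw [hj]
      exact hT _
    · have hv : ((l - 1 : Fin (m1+1)) : ℕ) = (l : ℕ) - 1 := by
        rw [Fin.coe_sub_one, if_neg hl]
      have hl1 : 1 ≤ (l : ℕ) := Nat.one_le_iff_ne_zero.mpr (fun h => hl (Fin.ext (by
        rw [h, Fin.val_zero])))
      have hcast : (((l:ℕ)) : Fin (m+1)) = 1 + (((l:ℕ)-1 : ℕ) : Fin (m+1)) := by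
        rw [Nat.cast_sub hl1]; push_cast; ring
      have harg : i + (((l:ℕ)) : Fin (m+1)) = i + 1 + (((l:ℕ)-1 : ℕ) : Fin (m+1)) := by
        rw [hcast]; abel
      rw [hv, harg]
  · -- second block
    refine Finset.sum_congr rfl ?_
    intro l _
    simp only [hf]
    by_cases hl : l = 0
    · subst hl
      have hv : ((0 - 1 : Fin (m2+1)) : ℕ) = m2 := by
        rw [Fin.coe_sub_one]; simp
      have hm2' : ((m+1 : ℕ) : Fin (m+1)) = 0 := Fin.natCast_self (m+1)
      have h2 : j + 1 + ((m2 : ℕ) : Fin (m+1)) = i := by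
        have key : ((t1:ℕ) : Fin (m+1)) + (1 + ((m2:ℕ) : Fin (m+1))) = 0 := by
          calc ((t1:ℕ) : Fin (m+1)) + (1 + ((m2:ℕ) : Fin (m+1)))
              = ((t1 + (1 + m2) : ℕ) : Fin (m+1)) := by push_cast; ring
            _ = 0 := by rw [show t1 + (1+m2) = m + 1 from by omega, hm2']
        rw [← hij']
        calc i + ((t1:ℕ) : Fin (m+1)) + 1 + ((m2:ℕ) : Fin (m+1))
            = i + (((t1:ℕ) : Fin (m+1)) + (1 + ((m2:ℕ) : Fin (m+1)))) := by abel
          _ = i := by rw [key, add_zero]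
      rw [hv]
      simp only [Fin.val_zero, Nat.cast_zero, Nat.add_zero, add_zero]
      rw [show i + 1 + ((t1:ℕ) : Fin (m+1)) = j + 1 from by rw [← hij']; abel]
      rw [show i + ((t1:ℕ) : Fin (m+1)) = j from hij']
      rw [h2]
      exact (hT _).symm
    · have hv : ((l - 1 : Fin (m2+1)) : ℕ) = (l : ℕ) - 1 := by
        rw [Fin.coe_sub_one, if_neg hl]
      have hl1 : 1 ≤ (l : ℕ) := Nat.one_le_iff_ne_zero.mpr (fun h => hl (Fin.ext (by
        rw [h, Fin.val_zero])))
      have hcast : (((l:ℕ)) : Fin (m+1)) = 1 + (((l:ℕ)-1 : ℕ) : Fin (m+1)) := by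
        rw [Nat.cast_sub hl1]; push_cast; ring
      have hc : ((t1 + (l:ℕ) : ℕ) : Fin (m+1)) = ((t1:ℕ):Fin (m+1)) + ((l:ℕ) : Fin (m+1)) := by
        push_cast; ring
      have harg : j + (((l:ℕ)) : Fin (m+1)) = j + 1 + (((l:ℕ)-1 : ℕ) : Fin (m+1)) := by
        rw [hcast]; abel
      rw [hv, hc]
      rw [show i + 1 + (((t1:ℕ):Fin (m+1)) + (((l:ℕ):ℕ) : Fin (m+1))) = j + 1 + (((l:ℕ):ℕ) : Fin (m+1)) from by rw [← hij']; abel]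
      rw [show i + (((t1:ℕ):Fin (m+1)) + (((l:ℕ):ℕ) : Fin (m+1))) = j + (((l:ℕ):ℕ) : Fin (m+1)) from by rw [← hij']; abel]
      rw [harg]

section L1sec

variable {X Y : Type*} [Fintype X] [Fintype Y] {p : X × Y → ℝ}

lemma sum_shift {m : ℕ} (g : Fin (m+1) → ℝ) :
    ∑ i, g (i + 1) = ∑ i, g i :=
  Fintype.sum_equiv (Equiv.addRight 1) (fun i => g (i+1)) g (fun i => rfl)

lemma sum_shift' {m : ℕ} (g : Fin (m+1) → ℝ) :
    ∑ i, g (i - 1) = ∑ i, g i :=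
  Fintype.sum_equiv (Equiv.subRight 1) (fun i => g (i-1)) g (fun i => rfl)

/-- The key cyclic-sum upper bound. -/
lemma cyclic_sum_le (hp : IsPMF p) (hpos : ∀ s, 0 < p s) :
    ∀ m : ℕ, ∀ (x : Fin (m+1) → X) (y : Fin (m+1) → Y),
      ∑ i, (Real.log (p (x i, y (i-1))) - Real.log (p (x i, y i)))
        ≤ (m+1) * (- Real.log (eps1 p)) := by
  intro m
  induction m using Nat.strong_induction_on with
  | _ m IH =>
  intro x y
  by_cases hy : Function.Injective y
  · by_cases hx : Function.Injective x
    · -- base case : admissible path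
      have hadm : IsAdmissiblePath p x y := ⟨hx, hy, fun i => hpos _⟩
      have hmem : pathValue p x y ∈ pathSet p := ⟨m, x, y, hadm, rfl⟩
      have h1 : eps1 p ≤ pathValue p x y := eps1_le hpos hmem
      have heps : 0 < eps1 p := eps1_pos hp hpos
      set N := ∏ i, p (x i, y i) with hN
      set D := ∏ i, p (x i, y (i-1)) with hD
      have hNpos : 0 < N := Finset.prod_pos fun i _ => hpos _
      have hDpos : 0 < D := Finset.prod_pos fun i _ => hpos _
      have hlog : Real.log (eps1 p) ≤ (1/(m+1:ℝ)) * (Real.log N - Real.log D) := by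
        have h2 : Real.log (eps1 p) ≤ Real.log (pathValue p x y) :=
          Real.log_le_log heps h1
        rwa [show pathValue p x y = (N/D) ^ (1/(m+1:ℝ)) from rfl,
          Real.log_rpow (by positivity), Real.log_div (ne_of_gt hNpos) (ne_of_gt hDpos)] at h2
      have hlogN : Real.log N = ∑ i, Real.log (p (x i, y i)) :=
        Real.log_prod (fun i _ => ne_of_gt (hpos _))
      have hlogD : Real.log D = ∑ i, Real.log (p (x i, y (i-1))) :=
        Real.log_prod (fun i _ => ne_of_gt (hpos _))
      rw [Finset.sum_sub_distrib, ← hlogD, ← hlogN]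
      have hm1 : (0:ℝ) < m + 1 := by positivity
      rw [div_mul_eq_mul_div, le_div_iff₀ hm1] at hlog
      nlinarith [hlog]
    · -- x not injective : swapped system
      rw [Function.not_injective_iff] at hx
      obtain ⟨i, j, hxij, hij⟩ := hx
      set T : (X × Y) → (X × Y) → ℝ :=
        fun w w' => Real.log (p (w.1, w.2)) - Real.log (p (w'.1, w.2)) with hT
      set w : Fin (m+1) → X × Y := fun l => (x (l + 1), y l) with hw
      have key : ∀ k, k < m → ∀ zz : Fin (k+1) → X × Y,
          ∑ l, T (zz l) (zz (l-1)) ≤ (k+1) * (- Real.log (eps1 p)) := by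
        intro k hk zz
        have h1 := IH k hk (fun l => (zz (l-1)).1) (fun l => (zz l).2)
        refine le_trans (le_of_eq ?_) h1
        simp only [hT]
        rw [Finset.sum_sub_distrib, Finset.sum_sub_distrib]
        congr 1
        exact (sum_shift' (fun l => Real.log (p ((zz l).1, (zz l).2)))).symm
      have hsum0 : ∑ i, (Real.log (p (x i, y (i-1))) - Real.log (p (x i, y i)))
          = ∑ l, T (w l) (w (l - 1)) := by
        have e1 : ∀ l : Fin (m+1), T (w l) (w (l-1))
            = Real.log (p (x (l+1), y l)) - Real.log (p (x l, y l)) := by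
          intro l
          simp only [hT, hw]
          rw [show l - 1 + 1 = l from by abel]
        rw [Finset.sum_congr rfl (fun l _ => e1 l), Finset.sum_sub_distrib,
          Finset.sum_sub_distrib]
        congr 1
        rw [← sum_shift (fun i => Real.log (p (x i, y (i-1))))]
        refine Finset.sum_congr rfl fun l _ => ?_
        rw [show l + 1 - 1 = l from by abel]
      have hTcond : ∀ v, T v (w (i - 1)) = T v (w (j - 1)) := by
        intro v
        simp only [hT, hw]
        rw [show i - 1 + 1 = i from by abel, show j - 1 + 1 = j from by abel, hxij]
      have hij' : i - 1 ≠ j - 1 := fun h => hij (by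
        have h2 := congrArg (· + 1) h
        simpa [sub_add_cancel] using h2)
      obtain ⟨m1, m2, z1, z2, hmm, hsum⟩ := cycle_split T w hij' hTcond
      rw [hsum0, hsum]
      have k1 := key m1 (by omega) z1
      have k2 := key m2 (by omega) z2
      have hcast : (m1:ℝ) + m2 + 1 = m := by exact_mod_cast congrArg (Nat.cast (R := ℝ)) hmm
      have : ((m1:ℝ)+1) * (- Real.log (eps1 p)) + ((m2:ℝ)+1) * (- Real.log (eps1 p))
          = ((m:ℝ)+1) * (- Real.log (eps1 p)) := by
        rw [← add_mul]; congr 1; linarith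
      linarith
  · -- y not injective
    rw [Function.not_injective_iff] at hy
    obtain ⟨i, j, hyij, hij⟩ := hy
    set T : (X × Y) → (X × Y) → ℝ :=
      fun w w' => Real.log (p (w.1, w'.2)) - Real.log (p (w.1, w.2)) with hT
    set z : Fin (m+1) → X × Y := fun i => (x i, y i) with hz
    have key : ∀ k, k < m → ∀ zz : Fin (k+1) → X × Y,
        ∑ l, T (zz l) (zz (l-1)) ≤ (k+1) * (- Real.log (eps1 p)) := by
      intro k hk zz
      have h1 := IH k hk (fun l => (zz l).1) (fun l => (zz l).2)
      exact le_trans (le_of_eq (Finset.sum_congr rfl fun l _ => rfl)) h1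
    have hsum0 : ∑ i, (Real.log (p (x i, y (i-1))) - Real.log (p (x i, y i)))
        = ∑ l, T (z l) (z (l - 1)) := Finset.sum_congr rfl fun l _ => rfl
    have hTcond : ∀ v, T v (z i) = T v (z j) := by
      intro v
      simp only [hT, hz]
      rw [hyij]
    obtain ⟨m1, m2, z1, z2, hmm, hsum⟩ := cycle_split T z hij hTcond
    rw [hsum0, hsum]
    have k1 := key m1 (by omega) z1
    have k2 := key m2 (by omega) z2
    have hcast : (m1:ℝ) + m2 + 1 = m := by exact_mod_cast congrArg (Nat.cast (R := ℝ)) hmm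
    have : ((m1:ℝ)+1) * (- Real.log (eps1 p)) + ((m2:ℝ)+1) * (- Real.log (eps1 p))
        = ((m:ℝ)+1) * (- Real.log (eps1 p)) := by
      rw [← add_mul]; congr 1; linarith
    linarith

open scoped Fin.NatCast Fin.CommRing in
lemma cyclic_sum_ge (hp : IsPMF p) (hpos : ∀ s, 0 < p s)
    (m : ℕ) (x : Fin (m+1) → X) (y : Fin (m+1) → Y) :
    -((m+1) * (- Real.log (eps1 p)))
      ≤ ∑ i, (Real.log (p (x i, y (i-1))) - Real.log (p (x i, y i))) := by
  have h := cyclic_sum_le hp hpos m (fun i => x (-i)) (fun i => y (-i - 1))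
  beta_reduce at h
  have e : ∑ i : Fin (m+1), (Real.log (p (x (-i), y (-(i-1) - 1))) - Real.log (p (x (-i), y (-i - 1))))
      = ∑ j : Fin (m+1), (Real.log (p (x j, y j)) - Real.log (p (x j, y (j-1)))) := by
    refine Fintype.sum_equiv (Equiv.neg (Fin (m+1))) _ _ ?_
    intro i
    simp only [Equiv.neg_apply]
    rw [show -(i-1) - 1 = -i from by ring]
  rw [e] at h
  have hS : (∑ j, (Real.log (p (x j, y j)) - Real.log (p (x j, y (j-1)))))
      = - ∑ j, (Real.log (p (x j, y (j-1))) - Real.log (p (x j, y j))) := by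
    rw [← Finset.sum_neg_distrib]
    exact Finset.sum_congr rfl fun j _ => by ring
  rw [hS] at h
  linarith

end L1sec

section BF

variable {X : Type*} [Fintype X] [Nonempty X]

/-- Bellman-Ford iteration. -/
noncomputable def BF (c : X → X → ℝ) : ℕ → X → ℝ
  | 0 => fun _ => 0
  | (n+1) => fun x => min (BF c n x)
      (Finset.univ.inf' Finset.univ_nonempty (fun x' => BF c n x' + c x' x))

lemma BF_le_succ (c : X → X → ℝ) (n : ℕ) (x : X) : BF c (n+1) x ≤ BF c n x :=
  min_le_left _ _

lemma BF_le (c : X → X → ℝ) (n : ℕ) (x' x : X) :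
    BF c (n+1) x ≤ BF c n x' + c x' x :=
  le_trans (min_le_right _ _) (Finset.inf'_le _ (Finset.mem_univ x'))

lemma BF_walk (c : X → X → ℝ) (n : ℕ) (x : X) :
    ∃ (m : ℕ) (w : Fin (m+1) → X), w (Fin.last m) = x ∧
      BF c n x = ∑ i : Fin m, c (w i.castSucc) (w i.succ) := by
  induction n generalizing x with
  | zero => exact ⟨0, fun _ => x, rfl, by simp [BF]⟩
  | succ n IH =>
    rcases min_cases (BF c n x)
        (Finset.univ.inf' Finset.univ_nonempty (fun x' => BF c n x' + c x' x)) with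
      ⟨hmin, _⟩ | ⟨hmin, _⟩
    · obtain ⟨m, w, hlast, hsum⟩ := IH x
      exact ⟨m, w, hlast, by rw [show BF c (n+1) x = _ from hmin, hsum]⟩
    · obtain ⟨xs, _, hxs⟩ := Finset.exists_mem_eq_inf' (Finset.univ_nonempty)
        (fun x' => BF c n x' + c x' x)
      obtain ⟨m, w, hlast, hsum⟩ := IH xs
      refine ⟨m+1, Fin.snoc w x, Fin.snoc_last _ _, ?_⟩
      have hstep : BF c (n+1) x = BF c n xs + c xs x := by
        rw [show BF c (n+1) x = _ from hmin, hxs]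
      rw [hstep, hsum, Fin.sum_univ_castSucc]
      congr 1
      · refine Finset.sum_congr rfl fun i _ => ?_
        rw [Fin.succ_castSucc, Fin.snoc_castSucc, Fin.snoc_castSucc]
      · rw [Fin.succ_last, Fin.snoc_last, Fin.snoc_castSucc, hlast]

lemma castSucc_add_one {m : ℕ} (i : Fin m) :
    (i.castSucc : Fin (m+1)) + 1 = i.succ := Fin.coeSucc_eq_succ

lemma BF_lowerBound (c : X → X → ℝ)
    (hcyc : ∀ (m : ℕ) (w : Fin (m+1) → X), 0 ≤ ∑ i, c (w i) (w (i+1)))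
    (C : ℝ) (hC : ∀ x x', c x x' ≤ C) (n : ℕ) (x : X) :
    -C ≤ BF c n x := by
  obtain ⟨m, w, hlast, hsum⟩ := BF_walk c n x
  have h0 := hcyc m w
  have hcval : ∑ i : Fin (m+1), c (w i) (w (i+1))
      = (∑ i : Fin m, c (w i.castSucc) (w i.succ)) + c (w (Fin.last m)) (w 0) := by
    rw [Fin.sum_univ_castSucc]
    congr 1
    · exact Finset.sum_congr rfl fun i _ => by rw [castSucc_add_one]
    · congr 1
      rw [Fin.last_add_one]
  rw [hcval] at h0
  have := hC (w (Fin.last m)) (w 0)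
  rw [hsum]
  linarith

/-- the potential. -/
noncomputable def BFpot (c : X → X → ℝ) (x : X) : ℝ := ⨅ n, BF c n x

lemma BFpot_spec (c : X → X → ℝ)
    (hcyc : ∀ (m : ℕ) (w : Fin (m+1) → X), 0 ≤ ∑ i, c (w i) (w (i+1)))
    (C : ℝ) (hC : ∀ x x', c x x' ≤ C) :
    ∀ x' x, BFpot c x ≤ BFpot c x' + c x' x := by
  intro x' x
  have hbdd : ∀ z : X, BddBelow (Set.range (fun n => BF c n z)) := by
    intro z
    exact ⟨-C, by rintro v ⟨n, rfl⟩; exact BF_lowerBound c hcyc C hC n z⟩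
  have h1 : ∀ n, BFpot c x - c x' x ≤ BF c n x' := by
    intro n
    have := BF_le c n x' x
    have h2 : BFpot c x ≤ BF c (n+1) x := ciInf_le (hbdd x) (n+1)
    linarith
  have h4 : BFpot c x - c x' x ≤ BFpot c x' := le_ciInf h1
  linarith

end BF

section Feas

variable {X Y : Type*} [Fintype X] [Fintype Y] {p : X × Y → ℝ}

lemma exists_potential (hp : IsPMF p) (hpos : ∀ s, 0 < p s) :
    ∃ (u : X → ℝ) (v : Y → ℝ), ∀ x y,
      Real.log (p (x, y)) + Real.log (eps1 p) ≤ u x + v y ∧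
        u x + v y ≤ Real.log (p (x, y)) := by
  obtain ⟨hX, hY⟩ := nonempty_of_pmf hp
  haveI := hX; haveI := hY
  set lam := - Real.log (eps1 p) with hlam
  obtain ⟨c, hcdef⟩ : ∃ c : X → X → ℝ, ∀ x' x'',
      c x' x'' = lam + Finset.univ.inf' Finset.univ_nonempty
        (fun yy => Real.log (p (x'', yy)) - Real.log (p (x', yy))) :=
    ⟨_, fun _ _ => rfl⟩
  have hcle : ∀ x' x'' yy, c x' x'' ≤ lam + (Real.log (p (x'', yy)) - Real.log (p (x', yy))) := by
    intro x' x'' yy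
    rw [hcdef]
    exact add_le_add_right (Finset.inf'_le _ (Finset.mem_univ yy)) lam
  have hcyc : ∀ (m : ℕ) (w : Fin (m+1) → X), 0 ≤ ∑ i, c (w i) (w (i+1)) := by
    intro m w
    have hch : ∀ i : Fin (m+1), ∃ yy : Y, c (w i) (w (i+1))
        = lam + (Real.log (p (w (i+1), yy)) - Real.log (p (w i, yy))) := by
      intro i
      obtain ⟨yy, _, hyy⟩ := Finset.exists_mem_eq_inf' Finset.univ_nonempty
        (fun yy => Real.log (p (w (i+1), yy)) - Real.log (p (w i, yy)))
      exact ⟨yy, by rw [hcdef, ← hyy]⟩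
    choose y hy using hch
    have hsum : ∑ i, c (w i) (w (i+1))
        = (m+1) * lam + ∑ i, (Real.log (p (w (i+1), y i)) - Real.log (p (w i, y i))) := by
      rw [Finset.sum_congr rfl (fun i _ => hy i), Finset.sum_add_distrib]
      congr 1
      rw [Finset.sum_const, Finset.card_univ, Fintype.card_fin, nsmul_eq_mul]
      push_cast; ring
    have hshift : ∑ i, (Real.log (p (w (i+1), y i)) - Real.log (p (w i, y i)))
        = ∑ i, (Real.log (p (w i, y (i-1))) - Real.log (p (w i, y i))) := by
      rw [Finset.sum_sub_distrib, Finset.sum_sub_distrib]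
      congr 1
      rw [← sum_shift (fun i => Real.log (p (w i, y (i-1))))]
      refine Finset.sum_congr rfl fun i _ => ?_
      rw [show i + 1 - 1 = i from by abel]
    have hge := cyclic_sum_ge hp hpos m w y
    rw [hsum, hshift]
    rw [← hlam] at hge
    linarith
  obtain ⟨C, hC⟩ : ∃ C, ∀ x x', c x x' ≤ C :=
    ⟨Finset.univ.sup' Finset.univ_nonempty (fun q : X × X => c q.1 q.2),
      fun x x' => Finset.le_sup' (fun q : X × X => c q.1 q.2) (Finset.mem_univ (x, x'))⟩
  set u := BFpot c with hu_def
  have hu := BFpot_spec c hcyc C hC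
  have hstar : ∀ x' x'' yy, u x'' ≤ u x' + (lam + (Real.log (p (x'', yy)) - Real.log (p (x', yy)))) :=
    fun x' x'' yy => (hu x' x'').trans (add_le_add_right (hcle x' x'' yy) _)
  obtain ⟨v, hvdef⟩ : ∃ v : Y → ℝ, ∀ yy,
      v yy = Finset.univ.inf' Finset.univ_nonempty (fun x' => Real.log (p (x', yy)) - u x') :=
    ⟨_, fun _ => rfl⟩
  refine ⟨u, v, fun x yy => ⟨?_, ?_⟩⟩
  · obtain ⟨xs, _, hxs⟩ := Finset.exists_mem_eq_inf' Finset.univ_nonempty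
      (fun x' => Real.log (p (x', yy)) - u x')
    have h1 := hstar x xs yy
    rw [hvdef yy, hxs]
    rw [hlam] at h1
    linarith
  · have h2 : v yy ≤ Real.log (p (x, yy)) - u x := by
      rw [hvdef yy]
      exact Finset.inf'_le _ (Finset.mem_univ x)
    linarith

end Feas

section Final

variable {X Y : Type*} [Fintype X] [Fintype Y] {p : X × Y → ℝ}

lemma pmf_exists_pos {S : Type*} [Fintype S] {q : S → ℝ} (hq : IsPMF q) : ∃ s, 0 < q s := by
  by_contra h
  push_neg at h
  have h0 : ∑ s, q s = 0 := Finset.sum_eq_zero fun s _ => le_antisymm (h s) (hq.1 s)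
  rw [hq.2] at h0
  norm_num at h0

lemma half1 (hp : IsPMF p) (hpos : ∀ s, 0 < p s) :
    ∃ (qX : X → ℝ) (qY : Y → ℝ), IsPMF qX ∧ IsPMF qY ∧
      (⨆ s : X × Y, ENNReal.ofReal (p s) / ENNReal.ofReal (qX s.1 * qY s.2)) *
        (⨆ s : X × Y, ENNReal.ofReal (qX s.1 * qY s.2) / ENNReal.ofReal (p s))
        ≤ ENNReal.ofReal (1 / eps1 p) := by
  obtain ⟨hX, hY⟩ := nonempty_of_pmf hp
  haveI := hX; haveI := hY
  obtain ⟨u, v, huv⟩ := exists_potential hp hpos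
  have hL : 0 < eps1 p := eps1_pos hp hpos
  set L := eps1 p with hLdef
  set Zx := ∑ x, Real.exp (u x) with hZx
  set Zy := ∑ y, Real.exp (v y) with hZy
  have hZxpos : 0 < Zx := Finset.sum_pos (fun x _ => Real.exp_pos _) Finset.univ_nonempty
  have hZypos : 0 < Zy := Finset.sum_pos (fun y _ => Real.exp_pos _) Finset.univ_nonempty
  refine ⟨fun x => Real.exp (u x) / Zx, fun y => Real.exp (v y) / Zy,
    ⟨fun x => by positivity, by rw [← Finset.sum_div]; exact div_self (ne_of_gt hZxpos)⟩,
    ⟨fun y => by positivity, by rw [← Finset.sum_div]; exact div_self (ne_of_gt hZypos)⟩, ?_⟩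
  have hqpos : ∀ s : X × Y, 0 < Real.exp (u s.1) / Zx * (Real.exp (v s.2) / Zy) :=
    fun s => by positivity
  have key1 : ∀ s : X × Y, p s / (Real.exp (u s.1) / Zx * (Real.exp (v s.2) / Zy))
      ≤ (Zx * Zy) / L := by
    rintro ⟨x, y⟩
    show p (x, y) / (Real.exp (u x) / Zx * (Real.exp (v y) / Zy)) ≤ Zx * Zy / L
    have h1 := (huv x y).1
    have hE : (0:ℝ) < Real.exp (u x + v y) := Real.exp_pos _
    have hple : p (x, y) * L ≤ Real.exp (u x + v y) := by
      have h2 : Real.log (p (x, y) * L) ≤ u x + v y := by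
        rw [Real.log_mul (ne_of_gt (hpos _)) (ne_of_gt hL)]
        linarith
      calc p (x, y) * L = Real.exp (Real.log (p (x, y) * L)) :=
            (Real.exp_log (mul_pos (hpos _) hL)).symm
        _ ≤ _ := Real.exp_le_exp.mpr h2
    have hqf : Real.exp (u x) / Zx * (Real.exp (v y) / Zy)
        = Real.exp (u x + v y) / (Zx * Zy) := by
      rw [Real.exp_add]; field_simp
    rw [hqf, div_le_div_iff₀ (div_pos (Real.exp_pos _) (mul_pos hZxpos hZypos)) hL]
    have h5 : Zx * Zy * (Real.exp (u x + v y) / (Zx * Zy)) = Real.exp (u x + v y) := by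
      field_simp
    rw [h5]
    exact hple
  have key2 : ∀ s : X × Y, (Real.exp (u s.1) / Zx * (Real.exp (v s.2) / Zy)) / p s
      ≤ 1 / (Zx * Zy) := by
    rintro ⟨x, y⟩
    show (Real.exp (u x) / Zx * (Real.exp (v y) / Zy)) / p (x, y) ≤ 1 / (Zx * Zy)
    have h2 := (huv x y).2
    have hEle : Real.exp (u x + v y) ≤ p (x, y) := by
      calc Real.exp (u x + v y) ≤ Real.exp (Real.log (p (x, y))) := Real.exp_le_exp.mpr h2
        _ = p (x, y) := Real.exp_log (hpos _)
    have hqf : Real.exp (u x) / Zx * (Real.exp (v y) / Zy)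
        = Real.exp (u x + v y) / (Zx * Zy) := by
      rw [Real.exp_add]; field_simp
    rw [hqf, div_div, div_le_div_iff₀ (mul_pos (mul_pos hZxpos hZypos) (hpos _)) (mul_pos hZxpos hZypos)]
    nlinarith [mul_le_mul_of_nonneg_right hEle
      (le_of_lt (show (0:ℝ) < Zx * Zy by positivity))]
  have hsup1 : (⨆ s : X × Y, ENNReal.ofReal (p s) /
      ENNReal.ofReal (Real.exp (u s.1) / Zx * (Real.exp (v s.2) / Zy)))
      ≤ ENNReal.ofReal ((Zx * Zy) / L) := by
    refine iSup_le fun s => ?_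
    rw [← ENNReal.ofReal_div_of_pos (hqpos s)]
    exact ENNReal.ofReal_le_ofReal (key1 s)
  have hsup2 : (⨆ s : X × Y, ENNReal.ofReal (Real.exp (u s.1) / Zx * (Real.exp (v s.2) / Zy)) /
      ENNReal.ofReal (p s))
      ≤ ENNReal.ofReal (1 / (Zx * Zy)) := by
    refine iSup_le fun s => ?_
    rw [← ENNReal.ofReal_div_of_pos (hpos s)]
    exact ENNReal.ofReal_le_ofReal (key2 s)
  calc _ ≤ ENNReal.ofReal ((Zx * Zy) / L) * ENNReal.ofReal (1 / (Zx * Zy)) :=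
        mul_le_mul' hsup1 hsup2
    _ = ENNReal.ofReal ((Zx * Zy) / L * (1 / (Zx * Zy))) :=
        (ENNReal.ofReal_mul (div_nonneg (by positivity) hL.le)).symm
    _ = ENNReal.ofReal (1 / L) := by
        congr 1
        field_simp

lemma half2 (hp : IsPMF p) (hpos : ∀ s, 0 < p s) (qX : X → ℝ) (qY : Y → ℝ)
    (hqX : IsPMF qX) (hqY : IsPMF qY) :
    ENNReal.ofReal (1 / eps1 p) ≤
      (⨆ s : X × Y, ENNReal.ofReal (p s) / ENNReal.ofReal (qX s.1 * qY s.2)) *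
        (⨆ s : X × Y, ENNReal.ofReal (qX s.1 * qY s.2) / ENNReal.ofReal (p s)) := by
  obtain ⟨hX, hY⟩ := nonempty_of_pmf hp
  haveI := hX; haveI := hY
  have hL : 0 < eps1 p := eps1_pos hp hpos
  by_cases hq : ∀ s : X × Y, 0 < qX s.1 * qY s.2
  · set A := Finset.univ.sup' Finset.univ_nonempty
      (fun s : X × Y => p s / (qX s.1 * qY s.2)) with hA
    set B := Finset.univ.sup' Finset.univ_nonempty
      (fun s : X × Y => (qX s.1 * qY s.2) / p s) with hB
    have hAle : ∀ s : X × Y, p s / (qX s.1 * qY s.2) ≤ A := fun s => by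
      rw [hA]; exact Finset.le_sup' (fun s : X × Y => p s / (qX s.1 * qY s.2)) (Finset.mem_univ s)
    have hBle : ∀ s : X × Y, (qX s.1 * qY s.2) / p s ≤ B := fun s => by
      rw [hB]; exact Finset.le_sup' (fun s : X × Y => (qX s.1 * qY s.2) / p s) (Finset.mem_univ s)
    obtain ⟨sA, _, hsA⟩ := Finset.exists_mem_eq_sup' (Finset.univ_nonempty)
      (fun s : X × Y => p s / (qX s.1 * qY s.2))
    obtain ⟨sB, _, hsB⟩ := Finset.exists_mem_eq_sup' (Finset.univ_nonempty)
      (fun s : X × Y => (qX s.1 * qY s.2) / p s)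
    have hApos : 0 < A := by rw [hA, hsA]; exact div_pos (hpos _) (hq _)
    have hBpos : 0 < B := by rw [hB, hsB]; exact div_pos (hq _) (hpos _)
    have hABpos : 0 < A * B := mul_pos hApos hBpos
    have key : (A * B)⁻¹ ≤ eps1 p := by
      apply le_csInf (pathSet_nonempty hp hpos)
      rintro v ⟨m, x, y, hadm, rfl⟩
      set N := ∏ i, p (x i, y i) with hN
      set D := ∏ i, p (x i, y (i-1)) with hD
      have hNpos : 0 < N := Finset.prod_pos fun i _ => hpos _
      have hDpos : 0 < D := Finset.prod_pos fun i _ => hpos _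
      have hQdpos : 0 < ∏ i, (qX (x i) * qY (y i)) := Finset.prod_pos fun i _ => hq (x i, y i)
      have hQmpos : 0 < ∏ i, (qX (x i) * qY (y (i-1))) := Finset.prod_pos fun i _ => hq (x i, y (i-1))
      have hqprod : ∏ i, (qX (x i) * qY (y (i-1))) = ∏ i, (qX (x i) * qY (y i)) := by
        rw [Finset.prod_mul_distrib, Finset.prod_mul_distrib]
        congr 1
        exact Fintype.prod_equiv (Equiv.subRight (1 : Fin (m+1)))
          (fun i => qY (y (i-1))) (fun i => qY (y i)) (fun i => rfl)
      have hDN : D / N = (∏ i, (p (x i, y (i-1)) / (qX (x i) * qY (y (i-1)))))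
          * ∏ i, ((qX (x i) * qY (y i)) / p (x i, y i)) := by
        rw [Finset.prod_div_distrib, Finset.prod_div_distrib, ← hD, ← hN, hqprod]
        rw [div_mul_div_comm]
        rw [mul_comm D _, mul_div_mul_left _ _ (ne_of_gt hQdpos)]
      have hbound : D / N ≤ (A*B)^(m+1) := by
        rw [hDN, ← Finset.prod_mul_distrib]
        have h6 : (A*B)^(m+1) = ∏ _i : Fin (m+1), (A*B) := by simp [Finset.prod_const]
        rw [h6]
        refine Finset.prod_le_prod (fun i _ => ?_) (fun i _ => ?_)
        · exact mul_nonneg (div_nonneg (hpos _).le (hq (x i, y (i-1))).le)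
            (div_nonneg (hq (x i, y i)).le (hpos _).le)
        · exact mul_le_mul (hAle (x i, y (i-1))) (hBle (x i, y i))
            (div_nonneg (hq (x i, y i)).le (hpos _).le) hApos.le
      have hND : ((A*B)⁻¹)^(m+1) ≤ N / D := by
        have h7 : ((A*B)^(m+1))⁻¹ ≤ (D/N)⁻¹ :=
          inv_anti₀ (div_pos hDpos hNpos) hbound
        rwa [← inv_pow, inv_div] at h7
      calc (A*B)⁻¹ = (((A*B)⁻¹) ^ (m+1 : ℕ)) ^ (1/(m+1:ℝ)) := by
            rw [← Real.rpow_natCast ((A*B)⁻¹) (m+1), ← Real.rpow_mul (by positivity)]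
            push_cast
            rw [mul_one_div, div_self (by positivity), Real.rpow_one]
        _ ≤ (N / D) ^ (1/(m+1:ℝ)) :=
            Real.rpow_le_rpow (by positivity) hND (by positivity)
        _ = pathValue p x y := rfl
    have h1L : 1 / eps1 p ≤ A * B := by
      rw [div_le_iff₀ hL]
      have h8 : (A*B) * (A*B)⁻¹ = 1 := mul_inv_cancel₀ (ne_of_gt hABpos)
      nlinarith [key, hABpos, hL]
    have le1 : ENNReal.ofReal A ≤
        ⨆ s : X × Y, ENNReal.ofReal (p s) / ENNReal.ofReal (qX s.1 * qY s.2) := by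
      rw [hA, hsA, ENNReal.ofReal_div_of_pos (hq sA)]
      exact le_iSup (fun s : X × Y => ENNReal.ofReal (p s) / ENNReal.ofReal (qX s.1 * qY s.2)) sA
    have le2 : ENNReal.ofReal B ≤
        ⨆ s : X × Y, ENNReal.ofReal (qX s.1 * qY s.2) / ENNReal.ofReal (p s) := by
      rw [hB, hsB, ENNReal.ofReal_div_of_pos (hpos sB)]
      exact le_iSup (fun s : X × Y => ENNReal.ofReal (qX s.1 * qY s.2) / ENNReal.ofReal (p s)) sB
    calc ENNReal.ofReal (1 / eps1 p) ≤ ENNReal.ofReal (A * B) :=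
          ENNReal.ofReal_le_ofReal h1L
      _ = ENNReal.ofReal A * ENNReal.ofReal B := ENNReal.ofReal_mul hApos.le
      _ ≤ _ := mul_le_mul' le1 le2
  · push_neg at hq
    obtain ⟨s0, hs0⟩ := hq
    have hs0' : qX s0.1 * qY s0.2 = 0 :=
      le_antisymm hs0 (mul_nonneg (hqX.1 _) (hqY.1 _))
    have htop : (⨆ s : X × Y, ENNReal.ofReal (p s) / ENNReal.ofReal (qX s.1 * qY s.2)) = ⊤ := by
      apply top_unique
      refine le_trans ?_ (le_iSup _ s0)
      rw [hs0', ENNReal.ofReal_zero,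
        ENNReal.div_zero (ENNReal.ofReal_pos.mpr (hpos s0)).ne']
    obtain ⟨x1, hx1⟩ := pmf_exists_pos hqX
    obtain ⟨y1, hy1⟩ := pmf_exists_pos hqY
    have hpos2 : 0 < ⨆ s : X × Y, ENNReal.ofReal (qX s.1 * qY s.2) / ENNReal.ofReal (p s) := by
      refine lt_of_lt_of_le ?_ (le_iSup _ ((x1, y1) : X × Y))
      exact ENNReal.div_pos (ENNReal.ofReal_pos.mpr (mul_pos hx1 hy1)).ne'
        ENNReal.ofReal_ne_top
    rw [htop, ENNReal.top_mul hpos2.ne']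
    exact le_top

end Final

/-- for a fully supported pmf `p` on `X × Y`,
`F(p) = 1/ε₁(p)`, where `F(p)` is the minimum over product pmfs `q = q_X · q_Y` of
`(max_{x,y} p(x,y)/q(x,y)) · (max_{x,y} q(x,y)/p(x,y))`, ratios being computed in
`ℝ≥0∞` so that `c/0 = ∞` for `c > 0`. -/
theorem F_eq_inv_eps1 {X Y : Type*} [Fintype X] [Fintype Y]
    (p : X × Y → ℝ) (hp : IsPMF p) (hpos : ∀ s, 0 < p s) :
    sInf { v : ENNReal | ∃ (qX : X → ℝ) (qY : Y → ℝ), IsPMF qX ∧ IsPMF qY ∧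
        v = (⨆ s : X × Y, ENNReal.ofReal (p s) / ENNReal.ofReal (qX s.1 * qY s.2)) *
            (⨆ s : X × Y, ENNReal.ofReal (qX s.1 * qY s.2) / ENNReal.ofReal (p s)) }
      = ENNReal.ofReal (1 / eps1 p) := by
  apply le_antisymm
  · obtain ⟨qX, qY, h1, h2, h3⟩ := half1 hp hpos
    exact le_trans (sInf_le ⟨qX, qY, h1, h2, rfl⟩) h3
  · refine le_sInf ?_
    rintro w ⟨qX, qY, h1, h2, rfl⟩
    exact half2 hp hpos qX qY h1 h2
end

section
/- Let A and R be finite sets, let p_A be a pmf on A with p_A(a) > 0 for all a, let ε ∈ [0,1], let B = A ⊔ {e}, and let p_{AB}(a,b) = (1−ε)·p_A(a)·1[b = a] + ε·p_A(a)·1[b = e] (an erasure channel with erasure probability ε). Let q : A → pmfs on R be any channel. Then there exists a channel p_{R|B} : B → pmfs on R such that Σ_{b∈B} p_{AB}(a,b)·p_{R|B}(r|b) = p_A(a)·q(r|a) for all a ∈ A and r ∈ R, if and only if Σ_{r∈R} min_{a∈A} q(r|a) ≥ ε. -/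
/-- The joint pmf of the input `A` and the output `B = A ⊕ {e}` of an erasure channel
with erasure probability `ε`; the erasure symbol `e` is `Sum.inr ()`. -/
noncomputable def erasurePair {A : Type*} [Fintype A] [DecidableEq A]
    (pA : A → ℝ) (ε : ℝ) : A → A ⊕ Unit → ℝ :=
  fun a b => Sum.elim (fun a' => if a' = a then (1 - ε) * pA a else 0)
    (fun _ => ε * pA a) b

/-- for an erasure channel from `A` to `B = A ⊕ {e}` with erasure
probability `ε` and any channel `q` from `A` to `R`, there is a channel `p_{R|B}`
with `Σ_b p_{AB}(a,b)·p_{R|B}(r|b) = p_A(a)·q(r|a)` for all `a, r` iff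
`Σ_r min_a q(r|a) ≥ ε`. -/
theorem erasure_degradation_iff {A R : Type*} [Fintype A] [Fintype R] [DecidableEq A]
    (pA : A → ℝ) (hpA : IsPMF pA) (hpos : ∀ a, 0 < pA a)
    (ε : ℝ) (hε : ε ∈ Set.Icc (0 : ℝ) 1)
    (q : A → R → ℝ) (hq : ∀ a, IsPMF (q a)) :
    (∃ pRB : A ⊕ Unit → R → ℝ, (∀ b, IsPMF (pRB b)) ∧
        ∀ a r, ∑ b : A ⊕ Unit, erasurePair pA ε a b * pRB b r = pA a * q a r)
      ↔ ε ≤ ∑ r, ⨅ a, q a r := by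
  obtain ⟨hε0, hε1⟩ := hε
  have hAne : Nonempty A := by
    by_contra h
    rw [not_nonempty_iff] at h
    have := hpA.2
    simp [Finset.univ_eq_empty] at this
  have hRne : Nonempty R := by
    by_contra h
    rw [not_nonempty_iff] at h
    have := (hq (Classical.arbitrary A)).2
    simp [Finset.univ_eq_empty] at this
  set f : R → ℝ := fun r => ⨅ a, q a r with hf
  have hbdd : ∀ r, BddBelow (Set.range fun a => q a r) := fun r =>
    Set.Finite.bddBelow (Set.finite_range _)
  have hf_le : ∀ r a, f r ≤ q a r := fun r a => ciInf_le (hbdd r) a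
  have hf0 : ∀ r, 0 ≤ f r := fun r => le_ciInf fun a => (hq a).1 r
  -- reduce the defining equation after cancelling `pA a`
  have hkey : ∀ (pRB : A ⊕ Unit → R → ℝ),
      (∀ a r, ∑ b : A ⊕ Unit, erasurePair pA ε a b * pRB b r = pA a * q a r) ↔
      (∀ a r, (1 - ε) * pRB (Sum.inl a) r + ε * pRB (Sum.inr ()) r = q a r) := by
    intro pRB
    have hsum : ∀ a r, ∑ b : A ⊕ Unit, erasurePair pA ε a b * pRB b r
        = pA a * ((1 - ε) * pRB (Sum.inl a) r + ε * pRB (Sum.inr ()) r) := by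
      intro a r
      rw [Fintype.sum_sum_type]
      simp only [erasurePair, Sum.elim_inl, Sum.elim_inr, Fintype.sum_unique]
      rw [Finset.sum_eq_single a]
      · simp; ring
      · intro b _ hb; simp [hb]
      · intro h; simp at h
    constructor
    · intro h a r
      have := (h a r).symm.trans (hsum a r)
      exact (mul_left_cancel₀ (hpos a).ne' this).symm
    · intro h a r
      rw [hsum, h]
  constructor
  · rintro ⟨pRB, hPMF, heq⟩
    rw [hkey] at heq
    have hm : ∀ r, ε * pRB (Sum.inr ()) r ≤ f r := by
      intro r
      refine le_ciInf fun a => ?_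
      have := heq a r
      nlinarith [(hPMF (Sum.inl a)).1 r, (hPMF (Sum.inr ())).1 r]
    calc ε = ∑ r, ε * pRB (Sum.inr ()) r := by
            rw [← Finset.mul_sum, (hPMF (Sum.inr ())).2, mul_one]
      _ ≤ ∑ r, f r := Finset.sum_le_sum fun r _ => hm r
  · intro hS
    set S := ∑ r, f r with hSdef
    have hS0 : 0 ≤ S := Finset.sum_nonneg fun r _ => hf0 r
    rcases eq_or_lt_of_le hε1 with hε1' | hε1'
    · -- ε = 1
      have hS1 : S ≤ 1 := by
        have a0 := Classical.arbitrary A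
        calc S ≤ ∑ r, q a0 r := Finset.sum_le_sum fun r _ => hf_le r a0
          _ = 1 := (hq a0).2
      have hSeq : S = 1 := le_antisymm hS1 (hε1' ▸ hS)
      have hfq : ∀ a r, f r = q a r := by
        intro a r
        by_contra hne
        have hlt : f r < q a r := lt_of_le_of_ne (hf_le r a) hne
        have : S < ∑ r, q a r :=
          Finset.sum_lt_sum (fun i _ => hf_le i a) ⟨r, Finset.mem_univ r, hlt⟩
        rw [hSeq, (hq a).2] at this
        exact lt_irrefl _ this
      refine ⟨fun b => Sum.elim q (fun _ => f) b, ?_, ?_⟩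
      · rintro (a | u)
        · exact hq a
        · exact ⟨hf0, hSeq⟩
      · rw [hkey]
        intro a r
        simp only [Sum.elim_inl, Sum.elim_inr, hε1']
        rw [← hfq a r]; ring
    · -- ε < 1
      have h1ε : (1 : ℝ) - ε ≠ 0 := by linarith
      rcases eq_or_lt_of_le hε0 with hε0' | hε0'
      · -- ε = 0
        refine ⟨fun b => Sum.elim q (fun _ r => (Fintype.card R : ℝ)⁻¹) b, ?_, ?_⟩
        · rintro (a | u)
          · exact hq a
          · constructor
            · intro r
              simp only [Sum.elim_inr]
              positivity
            · simp only [Sum.elim_inr]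
              rw [Finset.sum_const, nsmul_eq_mul, Finset.card_univ, mul_inv_cancel₀]
              exact Nat.cast_ne_zero.2 Fintype.card_ne_zero
        · rw [hkey]
          intro a r
          simp [← hε0']
      · -- 0 < ε < 1
        have hSpos : 0 < S := lt_of_lt_of_le hε0' hS
        have hmsum : ∑ r, f r / S = 1 := by
          rw [← Finset.sum_div]; exact div_self hSpos.ne'
        have hmε : ∀ r, ε * (f r / S) ≤ f r := by
          intro r
          calc ε * (f r / S) = f r * (ε / S) := by ring
            _ ≤ f r * 1 := by
                apply mul_le_mul_of_nonneg_left _ (hf0 r)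
                rw [div_le_one hSpos]; exact hS
            _ = f r := mul_one _
        refine ⟨fun b => Sum.elim (fun a r => (q a r - ε * (f r / S)) / (1 - ε))
            (fun _ r => f r / S) b, ?_, ?_⟩
        · rintro (a | u)
          · constructor
            · intro r
              simp only [Sum.elim_inl]
              apply div_nonneg _ (by linarith)
              have h1 := hmε r
              have h2 := hf_le r a
              linarith
            · simp only [Sum.elim_inl]
              rw [← Finset.sum_div, Finset.sum_sub_distrib, (hq a).2, ← Finset.mul_sum,
                hmsum, mul_one]
              field_simp
          · constructor
            · intro r
              simp only [Sum.elim_inr]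
              exact div_nonneg (hf0 r) hS0
            · simp only [Sum.elim_inr]
              exact hmsum
        · rw [hkey]
          intro a r
          simp only [Sum.elim_inl, Sum.elim_inr]
          field_simp
          ring
end

section
/- Let X, Y be finite sets, W a channel from X to Y, and p_X a pmf on X with p_X(x) > 0 for all x. Then η(W) equals the supremum, over all finite sets V, U and all joint pmfs p on V×U×X×Y of the form p(v,u,x,y) = p(v,u,x)·W(y|x) whose X-marginal is p_X and which additionally satisfy the Markov condition p(x|v,u) = p(x|u) whenever defined, with I(U;X|V) > 0, of the ratio I(U;Y|V)/I(U;X|V). -/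
/-- Mutual information `I(A;B)` of a joint (sub)pmf on `A × B`, with the convention
`0·log 0 = 0` (automatic for real multiplication since `Real.log 0 = 0`). -/
noncomputable def MI {A B : Type} [Fintype A] [Fintype B] (p : A → B → ℝ) : ℝ :=
  ∑ a, ∑ b, p a b * Real.log (p a b / ((∑ b', p a b') * (∑ a', p a' b)))

/-- Conditional mutual information `I(A;B|V) = Σ_v p(v)·I(A;B|V=v)` of a joint
(sub)pmf on `V × A × B`. -/
noncomputable def condMI {V A B : Type} [Fintype V] [Fintype A] [Fintype B]
    (p : V → A → B → ℝ) : ℝ :=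
  ∑ v, (∑ a, ∑ b, p v a b) * MI (fun a b => p v a b / (∑ a', ∑ b', p v a' b'))

/-- The strong data processing constant `s*(qA, W)`: the supremum over finite sets `U`
and channels `p(u|a)` with `I(U;A) > 0` of `I(U;B)/I(U;A)`, computed under
`qA(a)·W(b|a)·p(u|a)`. -/
noncomputable def sdpc {A B : Type} [Fintype A] [Fintype B]
    (qA : A → ℝ) (W : A → B → ℝ) : ℝ :=
  sSup { r : ℝ | ∃ (U : Type) (iU : Fintype U) (pu : A → U → ℝ), by
    letI := iU
    exact (∀ a, IsPMF (pu a)) ∧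
      0 < MI (fun u a => qA a * pu a u) ∧
      r = MI (fun u b => ∑ a, qA a * pu a u * W a b) / MI (fun u a => qA a * pu a u) }

/-- `η(W) = max_{q} s*(q, W)`, the maximum of the strong data processing constant
over input pmfs. -/
noncomputable def eta {A B : Type} [Fintype A] [Fintype B] (W : A → B → ℝ) : ℝ :=
  sSup { r : ℝ | ∃ qA : A → ℝ, IsPMF qA ∧ r = sdpc qA W }


open Finset

lemma one_sub_inv_le_log {t : ℝ} (ht : 0 < t) : 1 - 1/t ≤ Real.log t := by
  have h := Real.log_le_sub_one_of_pos (inv_pos.mpr ht)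
  rw [Real.log_inv] at h
  have : 1/t = t⁻¹ := one_div t
  linarith

lemma log_sum_ineq {I : Type*} (s : Finset I) (a b : I → ℝ)
    (ha : ∀ i ∈ s, 0 ≤ a i) (hb : ∀ i ∈ s, 0 ≤ b i)
    (hab : ∀ i ∈ s, 0 < a i → 0 < b i) :
    (∑ i ∈ s, a i) * Real.log ((∑ i ∈ s, a i) / (∑ i ∈ s, b i)) ≤
      ∑ i ∈ s, a i * Real.log (a i / b i) := by
  set A := ∑ i ∈ s, a i with hA
  rcases eq_or_lt_of_le (Finset.sum_nonneg ha) with h0 | hApos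
  · -- A = 0
    have hz : ∀ i ∈ s, a i = 0 :=
      (Finset.sum_eq_zero_iff_of_nonneg ha).mp h0.symm
    have : ∑ i ∈ s, a i * Real.log (a i / b i) = 0 :=
      Finset.sum_eq_zero (fun i hi => by rw [hz i hi]; ring)
    have hA0 : A = 0 := by rw [hA, ← h0]
    rw [this, hA0]
    simp
  · set s' := s.filter (fun i => 0 < a i) with hs'
    have hsub : s' ⊆ s := Finset.filter_subset _ _
    have hAs' : ∑ i ∈ s', a i = A := by
      rw [hA]
      refine Finset.sum_filter_of_ne (fun i hi hne => ?_)
      exact lt_of_le_of_ne (ha i hi) (Ne.symm hne)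
    have hRs' : ∑ i ∈ s', a i * Real.log (a i / b i)
        = ∑ i ∈ s, a i * Real.log (a i / b i) := by
      refine Finset.sum_filter_of_ne (fun i hi hne => ?_)
      have : a i ≠ 0 := fun h => hne (by rw [h]; ring)
      exact lt_of_le_of_ne (ha i hi) (Ne.symm this)
    have hne' : s'.Nonempty := by
      by_contra h
      rw [Finset.not_nonempty_iff_eq_empty] at h
      rw [h, Finset.sum_empty] at hAs'
      exact absurd hAs'.symm (ne_of_gt hApos)
    set B' := ∑ i ∈ s', b i with hB'
    have hB'pos : 0 < B' := Finset.sum_pos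
      (fun i hi => hab i (hsub hi) (Finset.mem_filter.mp hi).2) hne'
    have hBle : B' ≤ ∑ i ∈ s, b i :=
      Finset.sum_le_sum_of_subset_of_nonneg hsub (fun i hi _ => hb i hi)
    have hBpos : 0 < ∑ i ∈ s, b i := lt_of_lt_of_le hB'pos hBle
    -- step 1 : A log (A/B) ≤ A log (A/B')
    have step1 : A * Real.log (A / ∑ i ∈ s, b i) ≤ A * Real.log (A / B') := by
      apply mul_le_mul_of_nonneg_left _ (le_of_lt hApos)
      apply Real.log_le_log (div_pos hApos hBpos)
      exact div_le_div_of_nonneg_left (le_of_lt hApos) hB'pos hBle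
    -- step 2
    have key : ∀ i ∈ s', a i * Real.log (A / B') + (a i - (A/B') * b i)
        ≤ a i * Real.log (a i / b i) := by
      intro i hi
      have hai : 0 < a i := (Finset.mem_filter.mp hi).2
      have hbi : 0 < b i := hab i (hsub hi) hai
      have ht : 0 < (a i / b i) / (A / B') :=
        div_pos (div_pos hai hbi) (div_pos hApos hB'pos)
      have h1 := one_sub_inv_le_log ht
      have hlog : Real.log ((a i / b i) / (A / B'))
          = Real.log (a i / b i) - Real.log (A / B') :=
        Real.log_div (ne_of_gt (div_pos hai hbi)) (ne_of_gt (div_pos hApos hB'pos))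
      rw [hlog] at h1
      have hinv : 1 / ((a i / b i) / (A / B')) = (A * b i) / (B' * a i) := by
        field_simp
      rw [hinv] at h1
      have h2 := mul_le_mul_of_nonneg_left h1 (le_of_lt hai)
      have h3 : a i * (A * b i / (B' * a i)) = A / B' * b i := by
        field_simp
      rw [mul_sub, h3] at h2
      linarith [h2]
    have step2 : A * Real.log (A / B') ≤ ∑ i ∈ s', a i * Real.log (a i / b i) := by
      have hsum := Finset.sum_le_sum key
      have e1 : ∑ i ∈ s', (a i * Real.log (A / B') + (a i - (A/B') * b i))
          = A * Real.log (A / B') + (A - (A/B') * B') := by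
        rw [Finset.sum_add_distrib, Finset.sum_sub_distrib, ← Finset.sum_mul,
          ← Finset.mul_sum, hAs']
      have e2 : A / B' * B' = A := div_mul_cancel₀ A (ne_of_gt hB'pos)
      rw [e1, e2] at hsum
      linarith
    calc A * Real.log (A / ∑ i ∈ s, b i) ≤ A * Real.log (A / B') := step1
      _ ≤ ∑ i ∈ s', a i * Real.log (a i / b i) := step2
      _ = ∑ i ∈ s, a i * Real.log (a i / b i) := hRs'


lemma MI_nonneg {A B : Type} [Fintype A] [Fintype B] (p : A → B → ℝ)
    (h0 : ∀ a b, 0 ≤ p a b) (h1 : ∑ a, ∑ b, p a b = 1) : 0 ≤ MI p := by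
  have hsa : ∑ x : A × B, p x.1 x.2 = 1 := by
    rw [Fintype.sum_prod_type]; exact h1
  have hsb : ∑ x : A × B, (∑ b', p x.1 b') * (∑ a', p a' x.2) = 1 := by
    rw [Fintype.sum_prod_type]
    have : ∀ a : A, ∑ b : B, (∑ b', p a b') * (∑ a', p a' b)
        = (∑ b', p a b') * (∑ b : B, ∑ a', p a' b) := by
      intro a; rw [Finset.mul_sum]
    simp_rw [this]
    rw [← Finset.sum_mul, h1, one_mul, Finset.sum_comm, h1]
  have key := log_sum_ineq (Finset.univ : Finset (A × B))
    (fun x => p x.1 x.2)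
    (fun x => (∑ b', p x.1 b') * (∑ a', p a' x.2))
    (fun i _ => h0 i.1 i.2)
    (fun i _ => mul_nonneg (Finset.sum_nonneg (fun b' _ => h0 i.1 b'))
      (Finset.sum_nonneg (fun a' _ => h0 a' i.2)))
    (fun i _ hpos => by
      refine mul_pos (lt_of_lt_of_le hpos ?_) (lt_of_lt_of_le hpos ?_)
      · exact Finset.single_le_sum (fun b' _ => h0 i.1 b') (Finset.mem_univ i.2)
      · exact Finset.single_le_sum (fun a' _ => h0 a' i.2) (Finset.mem_univ i.1))
  rw [hsa, hsb] at key
  simp only [div_one, Real.log_one, mul_zero] at key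
  calc (0:ℝ) = 1 * 0 := by ring
    _ ≤ ∑ x : A × B, p x.1 x.2 * Real.log (p x.1 x.2 /
        ((∑ b', p x.1 b') * (∑ a', p a' x.2))) := by simpa using key
    _ = MI p := by rw [MI, Fintype.sum_prod_type]

lemma DPI {U X Y : Type} [Fintype U] [Fintype X] [Fintype Y] (p : U → X → ℝ) (W : X → Y → ℝ)
    (hp : ∀ u x, 0 ≤ p u x) (hW0 : ∀ x y, 0 ≤ W x y) (hW1 : ∀ x, ∑ y, W x y = 1) :
    MI (fun u y => ∑ x, p u x * W x y) ≤ MI p := by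
  -- marginals
  set pU : U → ℝ := fun u => ∑ x, p u x with hpU
  set pX : X → ℝ := fun x => ∑ u, p u x with hpX
  have hrow : ∀ u, (∑ y, ∑ x, p u x * W x y) = pU u := by
    intro u
    rw [Finset.sum_comm]
    simp_rw [← Finset.mul_sum, hW1, mul_one]
    rfl
  have hcol : ∀ y, (∑ u, ∑ x, p u x * W x y) = ∑ x, pX x * W x y := by
    intro y
    rw [Finset.sum_comm]
    simp_rw [hpX, Finset.sum_mul]
  have main : ∀ u y,
      (∑ x, p u x * W x y) * Real.log ((∑ x, p u x * W x y) /
        ((∑ y', ∑ x, p u x * W x y') * (∑ u', ∑ x, p u' x * W x y)))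
      ≤ ∑ x, p u x * W x y * Real.log (p u x / (pU u * pX x)) := by
    intro u y
    have hb : (∑ x, (pU u * pX x) * W x y)
        = (∑ y', ∑ x, p u x * W x y') * (∑ u', ∑ x, p u' x * W x y) := by
      rw [hrow, hcol, Finset.mul_sum]
      congr 1; ext x; ring
    rw [← hb]
    have key := log_sum_ineq (Finset.univ : Finset X)
      (fun x => p u x * W x y) (fun x => (pU u * pX x) * W x y)
      (fun x _ => mul_nonneg (hp u x) (hW0 x y))
      (fun x _ => mul_nonneg (mul_nonneg (Finset.sum_nonneg (fun x' _ => hp u x'))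
        (Finset.sum_nonneg (fun u' _ => hp u' x))) (hW0 x y))
      (fun x _ hpos => by
        have hW : 0 < W x y := by
          rcases lt_or_eq_of_le (hW0 x y) with h | h
          · exact h
          · exfalso; rw [← h, mul_zero] at hpos; exact lt_irrefl 0 hpos
        have hpux : 0 < p u x := by
          rcases lt_or_eq_of_le (hp u x) with h | h
          · exact h
          · exfalso; rw [← h, zero_mul] at hpos; exact lt_irrefl 0 hpos
        refine mul_pos (mul_pos ?_ ?_) hW
        · exact lt_of_lt_of_le hpux
            (Finset.single_le_sum (fun x' _ => hp u x') (Finset.mem_univ x))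
        · exact lt_of_lt_of_le hpux
            (Finset.single_le_sum (fun u' _ => hp u' x) (Finset.mem_univ u)))
    refine le_trans key (le_of_eq (Finset.sum_congr rfl (fun x _ => ?_)))
    rcases eq_or_lt_of_le (hW0 x y) with h | h
    · rw [← h]; ring_nf
    · rw [mul_div_mul_right _ _ (ne_of_gt h)]
  -- sum up
  have sum1 : MI (fun u y => ∑ x, p u x * W x y)
      ≤ ∑ u, ∑ y, ∑ x, p u x * W x y * Real.log (p u x / (pU u * pX x)) := by
    rw [MI]
    exact Finset.sum_le_sum (fun u _ => Finset.sum_le_sum (fun y _ => main u y))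
  refine le_trans sum1 (le_of_eq ?_)
  rw [MI]
  refine Finset.sum_congr rfl (fun u _ => ?_)
  rw [Finset.sum_comm]
  refine Finset.sum_congr rfl (fun x _ => ?_)
  calc ∑ y, p u x * W x y * Real.log (p u x / (pU u * pX x))
      = (∑ y, p u x * W x y) * Real.log (p u x / (pU u * pX x)) :=
        (Finset.sum_mul _ _ _).symm
    _ = p u x * Real.log (p u x / (pU u * pX x)) := by
        rw [← Finset.mul_sum, hW1, mul_one]
    _ = p u x * Real.log (p u x / ((∑ b', p u b') * (∑ a', p a' x))) := by
        rw [hpU, hpX]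


lemma MI_zero_of_single_row {U X : Type} [Fintype U] [Fintype X] [DecidableEq U]
    (f : U → X → ℝ) (u0 : U)
    (h : ∀ u, u ≠ u0 → ∀ x, f u x = 0) (hs : ∑ x, f u0 x = 1) : MI f = 0 := by
  rw [MI]
  refine Finset.sum_eq_zero (fun u _ => ?_)
  rcases eq_or_ne u u0 with rfl | hne
  · refine Finset.sum_eq_zero (fun x _ => ?_)
    have hcol : (∑ a', f a' x) = f u x :=
      Finset.sum_eq_single u (fun b _ hb => h b hb x) (fun hu => absurd (mem_univ u) hu)
    rw [hs, hcol, one_mul]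
    rcases eq_or_ne (f u x) 0 with h0 | h0
    · rw [h0]; ring
    · rw [div_self h0, Real.log_one, mul_zero]
  · refine Finset.sum_eq_zero (fun x _ => ?_)
    rw [h u hne x]; ring

lemma MI_option {U X : Type} [Fintype U] [Fintype X] (f : Option U → X → ℝ)
    (h : ∀ x, f none x = 0) :
    MI f = MI (fun u x => f (some u) x) := by
  rw [MI, MI, Fintype.sum_option]
  have hnone : ∑ x, f none x * Real.log (f none x /
      ((∑ b', f none b') * (∑ a', f a' x))) = 0 :=
    Finset.sum_eq_zero (fun x _ => by rw [h x]; ring)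
  rw [hnone, zero_add]
  refine Finset.sum_congr rfl (fun u _ => Finset.sum_congr rfl (fun x _ => ?_))
  rw [Fintype.sum_option, h x, zero_add]


section Bounds
variable {X Y : Type} [Fintype X] [Fintype Y] (W : X → Y → ℝ)
  (hW0 : ∀ x y, 0 ≤ W x y) (hW1 : ∀ x, ∑ y, W x y = 1)

include hW1 in
/-- total mass of the composed joint equals that of the original -/
lemma comp_mass {U : Type} [Fintype U] (p : U → X → ℝ) :
    (∑ u, ∑ y, ∑ x, p u x * W x y) = ∑ u, ∑ x, p u x := by
  refine Finset.sum_congr rfl (fun u _ => ?_)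
  rw [Finset.sum_comm]
  simp_rw [← Finset.mul_sum, hW1, mul_one]

include hW0 hW1 in
lemma sdpc_elt_le_one (qA : X → ℝ) (hqA0 : ∀ x, 0 ≤ qA x) {r : ℝ}
    (hr : ∃ (U : Type) (iU : Fintype U) (pu : X → U → ℝ), by
      letI := iU
      exact (∀ a, IsPMF (pu a)) ∧
        0 < MI (fun u a => qA a * pu a u) ∧
        r = MI (fun u b => ∑ a, qA a * pu a u * W a b) / MI (fun u a => qA a * pu a u)) :
    r ≤ 1 := by
  obtain ⟨U, iU, pu, hpu, hpos, hre⟩ := hr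
  rw [hre]
  apply div_le_one_of_le₀ _ (le_of_lt hpos)
  exact DPI (fun u a => qA a * pu a u) W
    (fun u a => mul_nonneg (hqA0 a) ((hpu a).1 u)) hW0 hW1

include hW0 hW1 in
lemma sdpc_le_one (qA : X → ℝ) (hqA0 : ∀ x, 0 ≤ qA x) : sdpc qA W ≤ 1 := by
  rw [sdpc]
  exact Real.sSup_le (fun r hr => sdpc_elt_le_one W hW0 hW1 qA hqA0 hr) zero_le_one

include hW0 hW1 in
lemma sdpc_bddAbove (qA : X → ℝ) (hqA0 : ∀ x, 0 ≤ qA x) :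
    BddAbove { r : ℝ | ∃ (U : Type) (iU : Fintype U) (pu : X → U → ℝ), by
      letI := iU
      exact (∀ a, IsPMF (pu a)) ∧
        0 < MI (fun u a => qA a * pu a u) ∧
        r = MI (fun u b => ∑ a, qA a * pu a u * W a b) / MI (fun u a => qA a * pu a u) } :=
  ⟨1, fun r hr => sdpc_elt_le_one W hW0 hW1 qA hqA0 hr⟩

include hW0 hW1 in
lemma sdpc_nonneg (qA : X → ℝ) (hqA : IsPMF qA) : 0 ≤ sdpc qA W := by
  rw [sdpc]
  apply Real.sSup_nonneg
  rintro r ⟨U, iU, pu, hpu, hpos, hre⟩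
  rw [hre]
  apply div_nonneg _ (le_of_lt hpos)
  apply MI_nonneg
  · intro u b
    exact Finset.sum_nonneg (fun a _ => mul_nonneg (mul_nonneg (hqA.1 a) ((hpu a).1 u)) (hW0 a b))
  · rw [comp_mass W hW1]
    calc (∑ u, ∑ a, qA a * pu a u) = ∑ a, qA a * ∑ u, pu a u := by
          rw [Finset.sum_comm]
          simp_rw [Finset.mul_sum]
      _ = 1 := by simp_rw [fun a => (hpu a).2, mul_one]; exact hqA.2

include hW0 hW1 in
lemma eta_nonneg (pX : X → ℝ) (hpX : IsPMF pX) : 0 ≤ eta W := by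
  rw [eta]
  apply Real.sSup_nonneg
  rintro r ⟨qA, hqA, rfl⟩
  exact sdpc_nonneg W hW0 hW1 qA hqA

include hW0 hW1 in
lemma eta_le_one : eta W ≤ 1 := by
  rw [eta]
  refine Real.sSup_le ?_ zero_le_one
  rintro r ⟨qA, hqA, rfl⟩
  exact sdpc_le_one W hW0 hW1 qA hqA.1

include hW0 hW1 in
lemma eta_bddAbove : BddAbove { r : ℝ | ∃ qA : X → ℝ, IsPMF qA ∧ r = sdpc qA W } :=
  ⟨1, by rintro r ⟨qA, hqA, rfl⟩; exact sdpc_le_one W hW0 hW1 qA hqA.1⟩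

end Bounds

section Slice
variable {X Y : Type} [Fintype X] [Fintype Y] (W : X → Y → ℝ)
  (hW0 : ∀ x y, 0 ≤ W x y) (hW1 : ∀ x, ∑ y, W x y = 1)

include hW0 hW1 in
/-- key slice bound: `I(U;Y) ≤ η(W)·I(U;X)` for any joint pmf on `U × X`. -/
lemma slice_le {U : Type} [Fintype U] (p : U → X → ℝ)
    (hp0 : ∀ u x, 0 ≤ p u x) (hp1 : ∑ u, ∑ x, p u x = 1) :
    MI (fun u y => ∑ x, p u x * W x y) ≤ eta W * MI p := by
  classical
  have hMI0 : 0 ≤ MI p := MI_nonneg p hp0 hp1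
  rcases eq_or_lt_of_le hMI0 with hz | hpos
  · -- MI p = 0 : use DPI
    have := DPI p W hp0 hW0 hW1
    rw [← hz] at this ⊢
    simpa using this
  · -- MI p > 0 : exhibit a channel
    have hU : Nonempty U := by
      by_contra h
      rw [not_nonempty_iff] at h
      rw [Finset.univ_eq_empty, Finset.sum_empty] at hp1
      exact one_ne_zero hp1.symm
    set qA : X → ℝ := fun x => ∑ u, p u x with hqA
    have hqA0 : ∀ x, 0 ≤ qA x := fun x => Finset.sum_nonneg (fun u _ => hp0 u x)
    have hqA1 : ∑ x, qA x = 1 := by rw [hqA, Finset.sum_comm]; exact hp1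
    obtain ⟨u0⟩ := hU
    set pu : X → U → ℝ := fun x u =>
      if 0 < qA x then p u x / qA x else (if u = u0 then 1 else 0) with hpu
    have hpupmf : ∀ x, IsPMF (pu x) := by
      intro x
      constructor
      · intro u
        rw [hpu]
        dsimp only
        split
        · exact div_nonneg (hp0 u x) (hqA0 x)
        · split <;> norm_num
      · rw [hpu]
        dsimp only
        by_cases h : 0 < qA x
        · simp only [if_pos h]
          rw [← Finset.sum_div, div_eq_one_iff_eq (ne_of_gt h)]
        · simp only [if_neg h]
          simp
    have heq : ∀ u x, qA x * pu x u = p u x := by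
      intro u x
      rw [hpu]
      dsimp only
      by_cases h : 0 < qA x
      · rw [if_pos h, mul_div_cancel₀ _ (ne_of_gt h)]
      · have h0 : qA x = 0 := le_antisymm (not_lt.mp h |>.trans_eq rfl) (hqA0 x)
        have hpz : p u x = 0 := le_antisymm (by
          calc p u x ≤ ∑ u', p u' x :=
                Finset.single_le_sum (fun u' _ => hp0 u' x) (Finset.mem_univ u)
            _ = 0 := h0) (hp0 u x)
        rw [h0, hpz, zero_mul]
    have hfun : (fun (u : U) (x : X) => qA x * pu x u) = p := by
      funext u x; exact heq u x
    have hfunY : (fun (u : U) (b : Y) => ∑ a, qA a * pu a u * W a b)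
        = (fun u y => ∑ x, p u x * W x y) := by
      funext u b
      exact Finset.sum_congr rfl (fun a _ => by rw [heq u a])
    have hmem : (MI (fun u y => ∑ x, p u x * W x y) / MI p) ∈
        { r : ℝ | ∃ (U : Type) (iU : Fintype U) (pu : X → U → ℝ), by
          letI := iU
          exact (∀ a, IsPMF (pu a)) ∧
            0 < MI (fun u a => qA a * pu a u) ∧
            r = MI (fun u b => ∑ a, qA a * pu a u * W a b) / MI (fun u a => qA a * pu a u) } := by
      refine ⟨U, inferInstance, pu, hpupmf, ?_, ?_⟩
      · rw [hfun]; exact hpos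
      · rw [hfun, hfunY]
    have h1 : MI (fun u y => ∑ x, p u x * W x y) / MI p ≤ sdpc qA W := by
      rw [sdpc]
      exact le_csSup (sdpc_bddAbove W hW0 hW1 qA hqA0) hmem
    have h2 : sdpc qA W ≤ eta W := by
      rw [eta]
      exact le_csSup (eta_bddAbove W hW0 hW1) ⟨qA, ⟨hqA0, hqA1⟩, rfl⟩
    calc MI (fun u y => ∑ x, p u x * W x y)
        = (MI (fun u y => ∑ x, p u x * W x y) / MI p) * MI p := by
          rw [div_mul_cancel₀ _ (ne_of_gt hpos)]
      _ ≤ eta W * MI p :=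
          mul_le_mul_of_nonneg_right (le_trans h1 h2) (le_of_lt hpos)

end Slice

section CondMI
variable {X Y : Type} [Fintype X] [Fintype Y] (W : X → Y → ℝ)
  (hW0 : ∀ x y, 0 ≤ W x y) (hW1 : ∀ x, ∑ y, W x y = 1)

include hW1 in
lemma comp_norm {U : Type} [Fintype U] (p : U → X → ℝ) (m : ℝ) :
    (fun (u : U) (y : Y) => (∑ x, p u x * W x y) / m)
      = (fun u y => ∑ x, (p u x / m) * W x y) := by
  funext u y
  rw [Finset.sum_div]
  exact Finset.sum_congr rfl (fun x _ => (div_mul_eq_mul_div _ _ _).symm)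

include hW0 hW1 in
lemma condMI_comp_le {V U : Type} [Fintype V] [Fintype U] (q : V → U → X → ℝ)
    (hq0 : ∀ v u x, 0 ≤ q v u x) :
    condMI (fun v u y => ∑ x, q v u x * W x y) ≤ eta W * condMI (fun v u x => q v u x) := by
  rw [condMI, condMI, Finset.mul_sum]
  refine Finset.sum_le_sum (fun v _ => ?_)
  have hmass : (∑ u, ∑ y, ∑ x, q v u x * W x y) = ∑ u, ∑ x, q v u x :=
    comp_mass W hW1 (q v)
  rw [hmass]
  set m := ∑ u, ∑ x, q v u x with hm
  have hm0 : 0 ≤ m := Finset.sum_nonneg (fun u _ => Finset.sum_nonneg (fun x _ => hq0 v u x))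
  rcases eq_or_lt_of_le hm0 with hz | hpos
  · -- zero mass
    rw [← hz, zero_mul, zero_mul, mul_zero]
  · rw [comp_norm W hW1 (q v) m]
    have h1 : ∑ u, ∑ x, q v u x / m = 1 := by
      simp_rw [← Finset.sum_div]
      exact div_self (ne_of_gt hpos)
    have := slice_le W hW0 hW1 (fun u x => q v u x / m)
      (fun u x => div_nonneg (hq0 v u x) hm0) h1
    calc m * MI (fun u y => ∑ x, q v u x / m * W x y)
        ≤ m * (eta W * MI (fun u x => q v u x / m)) :=
          mul_le_mul_of_nonneg_left this hm0
      _ = eta W * (m * MI (fun u x => q v u x / m)) := by ring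
  
include hW0 hW1 in
lemma condMI_comp_nonneg {V U : Type} [Fintype V] [Fintype U] (q : V → U → X → ℝ)
    (hq0 : ∀ v u x, 0 ≤ q v u x) :
    0 ≤ condMI (fun v u y => ∑ x, q v u x * W x y) := by
  rw [condMI]
  refine Finset.sum_nonneg (fun v _ => ?_)
  have hmass : (∑ u, ∑ y, ∑ x, q v u x * W x y) = ∑ u, ∑ x, q v u x :=
    comp_mass W hW1 (q v)
  rw [hmass]
  set m := ∑ u, ∑ x, q v u x with hm
  have hm0 : 0 ≤ m := Finset.sum_nonneg (fun u _ => Finset.sum_nonneg (fun x _ => hq0 v u x))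
  rcases eq_or_lt_of_le hm0 with hz | hpos
  · rw [← hz, zero_mul]
  · refine mul_nonneg hm0 ?_
    rw [comp_norm W hW1 (q v) m]
    apply MI_nonneg
    · intro u y
      exact Finset.sum_nonneg (fun x _ => mul_nonneg (div_nonneg (hq0 v u x) hm0) (hW0 x y))
    · rw [comp_mass W hW1]
      simp_rw [← Finset.sum_div]
      exact div_self (ne_of_gt hpos)

end CondMI

section Construct
variable {X Y : Type} [Fintype X] [Fintype Y] (W : X → Y → ℝ)
  (hW0 : ∀ x y, 0 ≤ W x y) (hW1 : ∀ x, ∑ y, W x y = 1)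
  (pX : X → ℝ) (hpX : IsPMF pX) (hpos : ∀ x, 0 < pX x)

include hW0 hW1 hpX hpos in
lemma mem_RHS {U : Type} [iU0 : Fintype U] (qA : X → ℝ) (hqA : IsPMF qA)
    (pu : X → U → ℝ) (hpu : ∀ a, IsPMF (pu a))
    (hMIX : 0 < MI (fun u a => qA a * pu a u)) :
    (MI (fun u b => ∑ a, qA a * pu a u * W a b) / MI (fun u a => qA a * pu a u)) ∈
      { r : ℝ | ∃ (V U : Type) (iV : Fintype V) (iU : Fintype U)
        (q : V → U → X → ℝ), by
      letI := iV; letI := iU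
      exact (∀ v u x, 0 ≤ q v u x) ∧
        (∑ v, ∑ u, ∑ x, q v u x) = 1 ∧
        (∀ x, ∑ v, ∑ u, q v u x = pX x) ∧
        (∀ v u x, 0 < (∑ x', q v u x') →
          q v u x / (∑ x', q v u x')
            = (∑ v', q v' u x) / (∑ v', ∑ x', q v' u x')) ∧
        0 < condMI (fun v u x => q v u x) ∧
        r = condMI (fun v u y => ∑ x, q v u x * W x y)
              / condMI (fun v u x => q v u x) } := by
  classical
  have hXne : Nonempty X := by
    by_contra h
    rw [not_nonempty_iff] at h
    have := hpX.2
    rw [Finset.univ_eq_empty, Finset.sum_empty] at this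
    exact one_ne_zero this.symm
  have huniv : (Finset.univ : Finset X).Nonempty := Finset.univ_nonempty
  set lam : ℝ := Finset.univ.inf' huniv (fun x => pX x / (qA x + 1)) with hlam
  have hqA1pos : ∀ x, (0:ℝ) < qA x + 1 := fun x => by linarith [hqA.1 x]
  have hlam_pos : 0 < lam := by
    rw [hlam, Finset.lt_inf'_iff]
    exact fun x _ => div_pos (hpos x) (hqA1pos x)
  have hlam_le : ∀ x, lam * qA x ≤ pX x := by
    intro x
    have h1 : lam ≤ pX x / (qA x + 1) := Finset.inf'_le _ (Finset.mem_univ x)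
    calc lam * qA x ≤ (pX x / (qA x + 1)) * qA x :=
          mul_le_mul_of_nonneg_right h1 (hqA.1 x)
      _ ≤ (pX x / (qA x + 1)) * (qA x + 1) :=
          mul_le_mul_of_nonneg_left (by linarith)
            (div_nonneg (le_of_lt (hpos x)) (le_of_lt (hqA1pos x)))
      _ = pX x := div_mul_cancel₀ _ (ne_of_gt (hqA1pos x))
  set q : Bool → Option U → X → ℝ := fun v o x =>
    bif v then Option.elim o 0 (fun u => lam * (qA x * pu x u))
    else Option.elim o (pX x - lam * qA x) (fun _ => 0) with hq
  have qts : ∀ u x, q true (some u) x = lam * (qA x * pu x u) := fun _ _ => rfl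
  have qtn : ∀ x, q true none x = 0 := fun _ => rfl
  have qfs : ∀ u x, q false (some u) x = 0 := fun _ _ => rfl
  have qfn : ∀ x, q false none x = pX x - lam * qA x := fun _ => rfl
  -- masses
  have hrow_t : ∀ x, ∑ u, q true (some u) x = lam * qA x := by
    intro x
    simp_rw [qts, ← Finset.mul_sum, (hpu x).2, mul_one]
  have htmass : ∑ o : Option U, ∑ x, q true o x = lam := by
    rw [Fintype.sum_option]
    simp_rw [qtn, Finset.sum_const_zero, zero_add]
    rw [Finset.sum_comm]
    simp_rw [hrow_t, ← Finset.mul_sum, hqA.2, mul_one]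
  have hfmass : ∑ o : Option U, ∑ x, q false o x = 1 - lam := by
    rw [Fintype.sum_option]
    simp_rw [qfs, Finset.sum_const_zero, add_zero, qfn]
    rw [Finset.sum_sub_distrib, hpX.2, ← Finset.mul_sum, hqA.2, mul_one]
  -- conditional MI computations
  have hMI_t : MI (fun (o : Option U) x => q true o x / lam)
      = MI (fun u a => qA a * pu a u) := by
    rw [MI_option _ (fun x => by rw [qtn, zero_div])]
    congr 1
    funext u x
    rw [qts, mul_div_cancel_left₀ _ (ne_of_gt hlam_pos)]
  have hMI_f : (1 - lam) * MI (fun (o : Option U) x => q false o x / (1 - lam)) = 0 := by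
    rcases eq_or_ne (1 - lam) 0 with h | h
    · rw [h, zero_mul]
    · have hz : ∀ o : Option U, o ≠ none → ∀ x, q false o x / (1 - lam) = 0 := by
        intro o ho x
        rcases o with _ | u
        · exact absurd rfl ho
        · rw [qfs, zero_div]
      have hs1 : ∑ x, q false none x / (1 - lam) = 1 := by
        simp_rw [qfn]
        rw [← Finset.sum_div, Finset.sum_sub_distrib, hpX.2, ← Finset.mul_sum,
          hqA.2, mul_one, div_self h]
      rw [MI_zero_of_single_row (fun o x => q false o x / (1 - lam)) none hz hs1, mul_zero]
  have hcondX : condMI (fun v u x => q v u x)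
      = lam * MI (fun u a => qA a * pu a u) := by
    rw [condMI, Fintype.sum_bool, htmass, hfmass, hMI_t, hMI_f, add_zero]
  have htmassY : ∑ o : Option U, ∑ y, ∑ x, q true o x * W x y = lam := by
    rw [comp_mass W hW1 (q true), htmass]
  have hfmassY : ∑ o : Option U, ∑ y, ∑ x, q false o x * W x y = 1 - lam := by
    rw [comp_mass W hW1 (q false), hfmass]
  have hMI_tY : MI (fun (o : Option U) y => (∑ x, q true o x * W x y) / lam)
      = MI (fun u b => ∑ a, qA a * pu a u * W a b) := by
    rw [MI_option _ (fun y => by simp_rw [qtn, zero_mul, Finset.sum_const_zero, zero_div])]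
    congr 1
    funext u y
    simp_rw [qts, mul_assoc lam, ← Finset.mul_sum]
    rw [mul_div_cancel_left₀ _ (ne_of_gt hlam_pos)]
  have hMI_fY : (1 - lam) *
      MI (fun (o : Option U) y => (∑ x, q false o x * W x y) / (1 - lam)) = 0 := by
    rcases eq_or_ne (1 - lam) 0 with h | h
    · rw [h, zero_mul]
    · have hz : ∀ o : Option U, o ≠ none → ∀ y, (∑ x, q false o x * W x y) / (1 - lam) = 0 := by
        intro o ho y
        rcases o with _ | u
        · exact absurd rfl ho
        · simp_rw [qfs, zero_mul, Finset.sum_const_zero, zero_div]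
      have hs1 : ∑ y, (∑ x, q false none x * W x y) / (1 - lam) = 1 := by
        simp_rw [qfn, ← Finset.sum_div]
        rw [Finset.sum_comm]
        simp_rw [← Finset.mul_sum, hW1, mul_one]
        rw [Finset.sum_sub_distrib, hpX.2, ← Finset.mul_sum, hqA.2, mul_one, div_self h]
      rw [MI_zero_of_single_row (fun o y => (∑ x, q false o x * W x y) / (1 - lam)) none hz hs1,
        mul_zero]
  have hcondY : condMI (fun v u y => ∑ x, q v u x * W x y)
      = lam * MI (fun u b => ∑ a, qA a * pu a u * W a b) := by
    rw [condMI, Fintype.sum_bool, htmassY, hfmassY, hMI_tY, hMI_fY, add_zero]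
  refine ⟨Bool, Option U, inferInstance, inferInstance, q, ?_, ?_, ?_, ?_, ?_, ?_⟩
  · -- nonneg
    intro v o x
    cases v <;> rcases o with _ | u
    · rw [qfn]; linarith [hlam_le x]
    · rw [qfs]
    · rw [qtn]
    · rw [qts]
      exact mul_nonneg (le_of_lt hlam_pos) (mul_nonneg (hqA.1 x) ((hpu x).1 u))
  · -- total mass 1
    rw [Fintype.sum_bool, htmass, hfmass]; ring
  · -- X-marginal
    intro x
    rw [Fintype.sum_bool, Fintype.sum_option, Fintype.sum_option]
    simp_rw [qtn, qfs, qfn, Finset.sum_const_zero, add_zero, zero_add]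
    rw [hrow_t x]
    ring
  · -- Markov
    intro v o x hm
    cases v <;> rcases o with _ | u
    · simp_rw [Fintype.sum_bool, qfn, qtn, Finset.sum_const_zero, zero_add]
    · exfalso
      simp_rw [qfs, Finset.sum_const_zero] at hm
      exact lt_irrefl 0 hm
    · exfalso
      simp_rw [qtn, Finset.sum_const_zero] at hm
      exact lt_irrefl 0 hm
    · simp_rw [Fintype.sum_bool, qts, qfs, Finset.sum_const_zero, add_zero]
  · -- condMI X positive
    rw [hcondX]
    exact mul_pos hlam_pos hMIX
  · rw [hcondX, hcondY, mul_div_mul_left _ _ (ne_of_gt hlam_pos)]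

end Construct

section RHS
variable {X Y : Type} [Fintype X] [Fintype Y] (W : X → Y → ℝ)
  (hW0 : ∀ x y, 0 ≤ W x y) (hW1 : ∀ x, ∑ y, W x y = 1) (pX : X → ℝ)

include hW0 hW1 in
lemma RHS_elt_le_eta {r : ℝ}
    (hr : r ∈ { r : ℝ | ∃ (V U : Type) (iV : Fintype V) (iU : Fintype U)
        (q : V → U → X → ℝ), by
      letI := iV; letI := iU
      exact (∀ v u x, 0 ≤ q v u x) ∧
        (∑ v, ∑ u, ∑ x, q v u x) = 1 ∧
        (∀ x, ∑ v, ∑ u, q v u x = pX x) ∧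
        (∀ v u x, 0 < (∑ x', q v u x') →
          q v u x / (∑ x', q v u x')
            = (∑ v', q v' u x) / (∑ v', ∑ x', q v' u x')) ∧
        0 < condMI (fun v u x => q v u x) ∧
        r = condMI (fun v u y => ∑ x, q v u x * W x y)
              / condMI (fun v u x => q v u x) }) : r ≤ eta W := by
  obtain ⟨V, U, iV, iU, q, hq0, hq1, hq2, hq3, hcX, rfl⟩ := hr
  rw [div_le_iff₀ hcX]
  exact condMI_comp_le W hW0 hW1 q hq0

include hW0 hW1 in
lemma RHS_elt_nonneg {r : ℝ}
    (hr : r ∈ { r : ℝ | ∃ (V U : Type) (iV : Fintype V) (iU : Fintype U)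
        (q : V → U → X → ℝ), by
      letI := iV; letI := iU
      exact (∀ v u x, 0 ≤ q v u x) ∧
        (∑ v, ∑ u, ∑ x, q v u x) = 1 ∧
        (∀ x, ∑ v, ∑ u, q v u x = pX x) ∧
        (∀ v u x, 0 < (∑ x', q v u x') →
          q v u x / (∑ x', q v u x')
            = (∑ v', q v' u x) / (∑ v', ∑ x', q v' u x')) ∧
        0 < condMI (fun v u x => q v u x) ∧
        r = condMI (fun v u y => ∑ x, q v u x * W x y)
              / condMI (fun v u x => q v u x) }) : 0 ≤ r := by
  obtain ⟨V, U, iV, iU, q, hq0, hq1, hq2, hq3, hcX, rfl⟩ := hr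
  exact div_nonneg (condMI_comp_nonneg W hW0 hW1 q hq0) (le_of_lt hcX)

include hW0 hW1 in
lemma RHS_bddAbove (hpX : IsPMF pX) :
    BddAbove { r : ℝ | ∃ (V U : Type) (iV : Fintype V) (iU : Fintype U)
        (q : V → U → X → ℝ), by
      letI := iV; letI := iU
      exact (∀ v u x, 0 ≤ q v u x) ∧
        (∑ v, ∑ u, ∑ x, q v u x) = 1 ∧
        (∀ x, ∑ v, ∑ u, q v u x = pX x) ∧
        (∀ v u x, 0 < (∑ x', q v u x') →
          q v u x / (∑ x', q v u x')
            = (∑ v', q v' u x) / (∑ v', ∑ x', q v' u x')) ∧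
        0 < condMI (fun v u x => q v u x) ∧
        r = condMI (fun v u y => ∑ x, q v u x * W x y)
              / condMI (fun v u x => q v u x) } :=
  ⟨1, fun r hr => le_trans (RHS_elt_le_eta W hW0 hW1 pX hr) (eta_le_one W hW0 hW1)⟩

include hW0 hW1 in
lemma RHS_sup_nonneg :
    0 ≤ sSup { r : ℝ | ∃ (V U : Type) (iV : Fintype V) (iU : Fintype U)
        (q : V → U → X → ℝ), by
      letI := iV; letI := iU
      exact (∀ v u x, 0 ≤ q v u x) ∧
        (∑ v, ∑ u, ∑ x, q v u x) = 1 ∧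
        (∀ x, ∑ v, ∑ u, q v u x = pX x) ∧
        (∀ v u x, 0 < (∑ x', q v u x') →
          q v u x / (∑ x', q v u x')
            = (∑ v', q v' u x) / (∑ v', ∑ x', q v' u x')) ∧
        0 < condMI (fun v u x => q v u x) ∧
        r = condMI (fun v u y => ∑ x, q v u x * W x y)
              / condMI (fun v u x => q v u x) } :=
  Real.sSup_nonneg (fun r hr => RHS_elt_nonneg W hW0 hW1 pX hr)

end RHS

/-- for a channel `W` from `X` to `Y` and a strictly positive input pmf
`p_X`, `η(W)` equals the supremum over finite `V, U` and joint pmfs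
`p(v,u,x,y) = p(v,u,x)·W(y|x)` with `X`-marginal `p_X` satisfying the Markov chain
`V → U → X` (i.e. `p(x|v,u) = p(x|u)` whenever defined) and `I(U;X|V) > 0`, of
`I(U;Y|V)/I(U;X|V)`. -/
theorem eta_eq_sup_condMI_ratio {X Y : Type} [Fintype X] [Fintype Y]
    (W : X → Y → ℝ) (hW : ∀ x, IsPMF (W x))
    (pX : X → ℝ) (hpX : IsPMF pX) (hpos : ∀ x, 0 < pX x) :
    eta W = sSup { r : ℝ | ∃ (V U : Type) (iV : Fintype V) (iU : Fintype U)
        (q : V → U → X → ℝ), by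
      letI := iV; letI := iU
      exact (∀ v u x, 0 ≤ q v u x) ∧
        (∑ v, ∑ u, ∑ x, q v u x) = 1 ∧
        (∀ x, ∑ v, ∑ u, q v u x = pX x) ∧
        (∀ v u x, 0 < (∑ x', q v u x') →
          q v u x / (∑ x', q v u x')
            = (∑ v', q v' u x) / (∑ v', ∑ x', q v' u x')) ∧
        0 < condMI (fun v u x => q v u x) ∧
        r = condMI (fun v u y => ∑ x, q v u x * W x y)
              / condMI (fun v u x => q v u x) } := by
  classical
  have hW0 : ∀ x y, 0 ≤ W x y := fun x => (hW x).1
  have hW1 : ∀ x, ∑ y, W x y = 1 := fun x => (hW x).2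
  refine le_antisymm ?_ ?_
  · rw [eta]
    refine Real.sSup_le ?_ (RHS_sup_nonneg W hW0 hW1 pX) ; rintro r ⟨qA, hqA, rfl⟩
    rw [sdpc]
    refine Real.sSup_le ?_ (RHS_sup_nonneg W hW0 hW1 pX) ; rintro s hs
    obtain ⟨U, iU, pu, hpu, hMIX, rfl⟩ := hs
    exact le_csSup (RHS_bddAbove W hW0 hW1 pX hpX)
      (mem_RHS W hW0 hW1 pX hpX hpos qA hqA pu hpu hMIX)
  · exact Real.sSup_le (fun r hr => RHS_elt_le_eta W hW0 hW1 pX hr)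
      (eta_nonneg W hW0 hW1 pX hpX)
end
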